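/- arXiv:1807.09132 — 6 statements merged into one kernel-verified Lean document; each statement's English description precedes it below -/
import Mathlib

section
/- Let (Ω, F, P) be a probability space, {F_n} an increasing sequence of σ-algebras (a filtration), and let v_n, a_n, b_n, c_n be nonnegative real-valued random variables adapted to {F_n}. If for every n the conditional expectation satisfies E[v_{n+1} | F_n] ≤ v_n (1 + a_n) + b_n − c_n almost surely, and if Σ_{n=1}^∞ a_n < ∞ and Σ_{n=1}^∞ b_n < ∞ almost surely, then with probability one the sequence {v_n} converges (to a finite limit) and Σ_{n=1}^∞ c_n < ∞. -/
open MeasureTheory Filter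
open scoped ENNReal NNReal

/-- **Robbins–Siegmund lemma.** If `v, a, b, c` are nonnegative random variables adapted to a
filtration `ℱ` with `E[v (n+1) | ℱ n] ≤ v n * (1 + a n) + b n - c n` a.s. for every `n`, and
`∑ a n < ∞`, `∑ b n < ∞` a.s., then a.s. `v n` converges to a finite limit and `∑ c n < ∞`. -/
theorem robbins_siegmund
    {Ω : Type*} {m0 : MeasurableSpace Ω} {μ : Measure Ω} [IsProbabilityMeasure μ]
    (ℱ : Filtration ℕ m0)
    (v a b c : ℕ → Ω → ℝ)
    (hv_adapted : Adapted ℱ v) (ha_adapted : Adapted ℱ a)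
    (hb_adapted : Adapted ℱ b) (hc_adapted : Adapted ℱ c)
    (hv_nonneg : ∀ n ω, 0 ≤ v n ω) (ha_nonneg : ∀ n ω, 0 ≤ a n ω)
    (hb_nonneg : ∀ n ω, 0 ≤ b n ω) (hc_nonneg : ∀ n ω, 0 ≤ c n ω)
    (hv_int : ∀ n, Integrable (v n) μ) (ha_int : ∀ n, Integrable (a n) μ)
    (hb_int : ∀ n, Integrable (b n) μ) (hc_int : ∀ n, Integrable (c n) μ)
    (hrec : ∀ n, μ[v (n + 1) | ℱ n] ≤ᵐ[μ] fun ω => v n ω * (1 + a n ω) + b n ω - c n ω)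
    (ha_sum : ∀ᵐ ω ∂μ, Summable fun n => a n ω)
    (hb_sum : ∀ᵐ ω ∂μ, Summable fun n => b n ω) :
    ∀ᵐ ω ∂μ, (∃ l : ℝ, Tendsto (fun n => v n ω) atTop (nhds l)) ∧
      Summable fun n => c n ω := by
  classical
  -- the compounding product
  set A : ℕ → Ω → ℝ := fun n ω => ∏ k ∈ Finset.range n, (1 + a k ω) with hA_def
  have hA1 : ∀ n ω, 1 ≤ A n ω := by
    intro n ω
    show (1:ℝ) ≤ ∏ k ∈ Finset.range n, (1 + a k ω)
    induction n with
    | zero => simp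
    | succ n ih =>
      rw [Finset.prod_range_succ]
      nlinarith [ha_nonneg n ω]
  have hApos : ∀ n ω, 0 < A n ω := fun n ω => lt_of_lt_of_le one_pos (hA1 n ω)
  have hA_succ : ∀ n ω, A (n + 1) ω = A n ω * (1 + a n ω) := fun n ω =>
    Finset.prod_range_succ _ n
  have hA_mono : ∀ ω, Monotone fun n => A n ω := by
    intro ω
    refine monotone_nat_of_le_succ fun n => ?_
    rw [hA_succ]
    nlinarith [hApos n ω, ha_nonneg n ω]
  have hA_meas : ∀ n m : ℕ, n ≤ m + 1 → Measurable[ℱ m] (A n) := by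
    intro n m hnm
    apply Finset.measurable_prod
    intro k hk
    have hk' : k ≤ m := by
      have := Finset.mem_range.1 hk; omega
    exact measurable_const.add ((ha_adapted k).mono (ℱ.mono hk') le_rfl)
  -- the almost-supermartingale
  set u : ℕ → Ω → ℝ := fun n ω =>
    v n ω / A n ω + ∑ k ∈ Finset.range n, (c k ω - b k ω) / A (k + 1) ω with hu_def
  have hu0 : ∀ ω, u 0 ω = v 0 ω := by
    intro ω; simp [hu_def, hA_def]
  have hu_adapted : StronglyAdapted ℱ u := by
    intro n
    apply StronglyMeasurable.add
    · exact ((hv_adapted n).div (hA_meas n n (by omega))).stronglyMeasurable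
    · refine (Finset.measurable_sum _ fun k hk => ?_).stronglyMeasurable
      have hk' : k < n := Finset.mem_range.1 hk
      exact (((hc_adapted k).mono (ℱ.mono hk'.le) le_rfl).sub
        ((hb_adapted k).mono (ℱ.mono hk'.le) le_rfl)).div
        (hA_meas (k+1) n (by omega))
  have habs_div : ∀ (x y : ℝ), 1 ≤ y → |x / y| ≤ |x| := by
    intro x y hy
    rw [abs_div]
    exact div_le_self (abs_nonneg x) (le_trans hy (le_abs_self y))
  have hu_int : ∀ n, Integrable (u n) μ := by
    intro n
    refine Integrable.add ?_ ?_
    · refine (hv_int n).mono ?_ (Eventually.of_forall fun ω => ?_)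
      · exact (((hv_adapted n).mono (ℱ.le n) le_rfl).div
          ((hA_meas n n (by omega)).mono (ℱ.le n) le_rfl)).aestronglyMeasurable
      · simpa only [Real.norm_eq_abs] using habs_div (v n ω) (A n ω) (hA1 n ω)
    · refine integrable_finset_sum _ fun k hk => ?_
      refine ((hc_int k).sub (hb_int k)).mono ?_ (Eventually.of_forall fun ω => ?_)
      · exact ((((hc_adapted k).mono (ℱ.le k) le_rfl).sub
          ((hb_adapted k).mono (ℱ.le k) le_rfl)).div
          ((hA_meas (k+1) (k+1) (by omega)).mono (ℱ.le (k+1)) le_rfl)).aestronglyMeasurable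
      · simpa only [Real.norm_eq_abs, Pi.sub_apply] using habs_div (c k ω - b k ω) (A (k+1) ω) (hA1 (k+1) ω)
  have hu_cond : ∀ n, μ[u (n + 1) | ℱ n] ≤ᵐ[μ] u n := by
    intro n
    set f : Ω → ℝ := fun ω => (A (n + 1) ω)⁻¹ with hf_def
    have hf_sm : StronglyMeasurable[ℱ n] f :=
      ((hA_meas (n + 1) n le_rfl).inv).stronglyMeasurable
    have hf_nonneg : ∀ ω, 0 ≤ f ω := fun ω => inv_nonneg.2 (hApos (n + 1) ω).le
    have hf_le_one : ∀ ω, f ω ≤ 1 := fun ω => inv_le_one_of_one_le₀ (hA1 (n + 1) ω)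
    set g : Ω → ℝ := fun ω =>
      (c n ω - b n ω) / A (n + 1) ω
        + ∑ k ∈ Finset.range n, (c k ω - b k ω) / A (k + 1) ω with hg_def
    have hg_sm : StronglyMeasurable[ℱ n] g := by
      apply StronglyMeasurable.add
      · exact (((hc_adapted n).sub (hb_adapted n)).div
          (hA_meas (n + 1) n le_rfl)).stronglyMeasurable
      · refine (Finset.measurable_sum _ fun k hk => ?_).stronglyMeasurable
        have hk' : k < n := Finset.mem_range.1 hk
        exact (((hc_adapted k).mono (ℱ.mono hk'.le) le_rfl).sub
          ((hb_adapted k).mono (ℱ.mono hk'.le) le_rfl)).div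
          (hA_meas (k + 1) n (by omega))
    have hg_int : Integrable g μ := by
      refine Integrable.add ?_ ?_
      · refine ((hc_int n).sub (hb_int n)).mono ?_ (Eventually.of_forall fun ω => ?_)
        · exact ((((hc_adapted n).mono (ℱ.le n) le_rfl).sub
            ((hb_adapted n).mono (ℱ.le n) le_rfl)).div
            ((hA_meas (n + 1) (n + 1) (by omega)).mono (ℱ.le (n + 1)) le_rfl)).aestronglyMeasurable
        · simpa only [Real.norm_eq_abs, Pi.sub_apply] using
            habs_div (c n ω - b n ω) (A (n + 1) ω) (hA1 (n + 1) ω)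
      · refine integrable_finset_sum _ fun k hk => ?_
        refine ((hc_int k).sub (hb_int k)).mono ?_ (Eventually.of_forall fun ω => ?_)
        · exact ((((hc_adapted k).mono (ℱ.le k) le_rfl).sub
            ((hb_adapted k).mono (ℱ.le k) le_rfl)).div
            ((hA_meas (k + 1) (k + 1) (by omega)).mono (ℱ.le (k + 1)) le_rfl)).aestronglyMeasurable
        · simpa only [Real.norm_eq_abs, Pi.sub_apply] using
            habs_div (c k ω - b k ω) (A (k + 1) ω) (hA1 (k + 1) ω)
    have hfv_int : Integrable (f * v (n + 1)) μ := by
      refine (hv_int (n + 1)).mono ?_ (Eventually.of_forall fun ω => ?_)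
      · exact ((hf_sm.mono (ℱ.le n)).mul ((hv_adapted (n + 1)).mono (ℱ.le (n + 1)) le_rfl).stronglyMeasurable).aestronglyMeasurable
      · simp only [Pi.mul_apply, Real.norm_eq_abs, abs_mul]
        calc |f ω| * |v (n + 1) ω| ≤ 1 * |v (n + 1) ω| := by
              apply mul_le_mul_of_nonneg_right _ (abs_nonneg _)
              rw [abs_of_nonneg (hf_nonneg ω)]; exact hf_le_one ω
          _ = |v (n + 1) ω| := one_mul _
    have hsplit : u (n + 1) = f * v (n + 1) + g := by
      funext ω
      simp only [hu_def, hf_def, hg_def, Pi.add_apply, Pi.mul_apply, Finset.sum_range_succ]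
      ring
    have halg : ∀ ω, f ω * (v n ω * (1 + a n ω) + b n ω - c n ω) + g ω = u n ω := by
      intro ω
      have h1 : A n ω ≠ 0 := (hApos n ω).ne'
      have h2 : (1 : ℝ) + a n ω ≠ 0 := by nlinarith [ha_nonneg n ω]
      simp only [hf_def, hg_def, hu_def]
      rw [hA_succ]
      field_simp
      ring
    have h1 : μ[u (n + 1)|ℱ n] =ᵐ[μ] μ[f * v (n + 1)|ℱ n] + μ[g|ℱ n] := by
      rw [hsplit]; exact condExp_add hfv_int hg_int _
    have h2 : μ[f * v (n + 1)|ℱ n] =ᵐ[μ] f * μ[v (n + 1)|ℱ n] :=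
      condExp_mul_of_stronglyMeasurable_left hf_sm hfv_int (hv_int (n + 1))
    have h3 : μ[g|ℱ n] = g := condExp_of_stronglyMeasurable (ℱ.le n) hg_sm hg_int
    filter_upwards [h1, h2, hrec n] with ω hω1 hω2 hω4
    rw [hω1, Pi.add_apply, hω2, h3, Pi.mul_apply]
    calc f ω * (μ[v (n + 1)|ℱ n]) ω + g ω
        ≤ f ω * (v n ω * (1 + a n ω) + b n ω - c n ω) + g ω := by
          have := mul_le_mul_of_nonneg_left hω4 (hf_nonneg ω)
          linarith
      _ = u n ω := halg ω
  have hu_super : Supermartingale u ℱ μ := supermartingale_nat hu_adapted hu_int hu_cond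
  -- partial sums of b / A
  set B : ℕ → Ω → ℝ := fun n ω => ∑ k ∈ Finset.range n, b k ω / A (k + 1) ω with hB_def
  have hB_nonneg : ∀ n ω, 0 ≤ B n ω :=
    fun n ω => Finset.sum_nonneg fun k _ => div_nonneg (hb_nonneg k ω) (hApos (k+1) ω).le
  have hB_mono : ∀ ω, Monotone fun n => B n ω := by
    intro ω
    refine monotone_nat_of_le_succ fun n => ?_
    simp only [hB_def, Finset.sum_range_succ]
    nlinarith [div_nonneg (hb_nonneg n ω) (hApos (n+1) ω).le]
  -- key localized convergence
  have hB_meas : ∀ n m : ℕ, n ≤ m + 1 → Measurable[ℱ m] (B n) := by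
    intro n m hnm
    apply Finset.measurable_sum
    intro k hk
    have hk' : k ≤ m := by have := Finset.mem_range.1 hk; omega
    exact ((hb_adapted k).mono (ℱ.mono hk') le_rfl).div
      (hA_meas (k + 1) m (by omega))
  have hu_plus : ∀ m ω, 0 ≤ u m ω + B m ω := by
    intro m ω
    simp only [hu_def, hB_def]
    have heq : v m ω / A m ω + (∑ k ∈ Finset.range m, (c k ω - b k ω) / A (k + 1) ω)
        + ∑ k ∈ Finset.range m, b k ω / A (k + 1) ω
        = v m ω / A m ω + ∑ k ∈ Finset.range m, c k ω / A (k + 1) ω := by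
      rw [add_assoc, ← Finset.sum_add_distrib]
      congr 1
      refine Finset.sum_congr rfl fun k _ => ?_
      rw [← add_div, sub_add_cancel]
    rw [heq]
    refine add_nonneg (div_nonneg (hv_nonneg m ω) (hApos m ω).le)
      (Finset.sum_nonneg fun k _ => div_nonneg (hc_nonneg k ω) (hApos (k + 1) ω).le)
  have key : ∀ M : ℕ, ∀ᵐ ω ∂μ, (∀ n, B (n + 1) ω ≤ M) →
      ∃ l, Tendsto (fun n => u n ω) atTop (nhds l) := by
    intro M
    set H : ℕ → Ω → ℝ := fun n ω => if B (n + 1) ω ≤ (M : ℝ) then 1 else 0 with hH_def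
    have hH_meas : ∀ n, Measurable[ℱ n] (H n) :=
      fun n => Measurable.ite (measurableSet_le (hB_meas (n + 1) n le_rfl) measurable_const)
        measurable_const measurable_const
    have hH_nonneg : ∀ n ω, 0 ≤ H n ω := by
      intro n ω; by_cases h : B (n + 1) ω ≤ (M : ℝ) <;> simp [hH_def, h]
    have hH_le_one : ∀ n ω, H n ω ≤ 1 := by
      intro n ω; by_cases h : B (n + 1) ω ≤ (M : ℝ) <;> simp [hH_def, h]
    set w : ℕ → Ω → ℝ := fun n ω =>
      u 0 ω + ∑ k ∈ Finset.range n, H k ω * (u (k + 1) ω - u k ω) with hw_def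
    have hw_all1 : ∀ n ω, (∀ k, k < n → H k ω = 1) → w n ω = u n ω := by
      intro n ω
      induction n with
      | zero => intro _; simp [hw_def]
      | succ n ih =>
        intro hall
        have h1 : w (n + 1) ω = w n ω + H n ω * (u (n + 1) ω - u n ω) := by
          simp only [hw_def, Finset.sum_range_succ]; ring
        rw [h1, ih (fun k hk => hall k (by omega)), hall n (by omega)]; ring
    have hw_adapted : StronglyAdapted ℱ w := by
      intro n
      refine StronglyMeasurable.add ((hu_adapted 0).mono (ℱ.mono (Nat.zero_le n))) ?_
      refine (Finset.measurable_sum _ fun k hk => ?_).stronglyMeasurable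
      have hk' : k < n := Finset.mem_range.1 hk
      exact ((hH_meas k).mono (ℱ.mono hk'.le) le_rfl).mul
        (((hu_adapted (k + 1)).measurable.mono (ℱ.mono hk') le_rfl).sub
          ((hu_adapted k).measurable.mono (ℱ.mono hk'.le) le_rfl))
    have hHmul_int : ∀ k j : ℕ, Integrable (fun ω => H k ω * (u (k + 1) ω - u j ω)) μ := by
      intro k j
      refine ((hu_int (k + 1)).sub (hu_int j)).mono ?_ (Eventually.of_forall fun ω => ?_)
      · exact (((hH_meas k).mono (ℱ.le k) le_rfl).mul
          (((hu_adapted (k + 1)).measurable.mono (ℱ.le (k + 1)) le_rfl).sub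
            ((hu_adapted j).measurable.mono (ℱ.le j) le_rfl))).aestronglyMeasurable
      · simp only [Real.norm_eq_abs, abs_mul]
        calc |H k ω| * |u (k + 1) ω - u j ω| ≤ 1 * |u (k + 1) ω - u j ω| := by
              apply mul_le_mul_of_nonneg_right _ (abs_nonneg _)
              rw [abs_of_nonneg (hH_nonneg k ω)]; exact hH_le_one k ω
          _ = _ := one_mul _
    have hw_int : ∀ n, Integrable (w n) μ :=
      fun n => (hu_int 0).add (integrable_finset_sum _ fun k _ => hHmul_int k k)
    have hw_cond : ∀ n, μ[w (n + 1) | ℱ n] ≤ᵐ[μ] w n := by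
      intro n
      set p : Ω → ℝ := fun ω => w n ω - H n ω * u n ω with hp_def
      have hp_sm : StronglyMeasurable[ℱ n] p :=
        ((hw_adapted n).measurable.sub
          ((hH_meas n).mul ((hu_adapted n).measurable))).stronglyMeasurable
      have hHu_int : ∀ j : ℕ, Integrable (fun ω => H n ω * u j ω) μ := by
        intro j
        refine (hu_int j).mono ?_ (Eventually.of_forall fun ω => ?_)
        · exact (((hH_meas n).mono (ℱ.le n) le_rfl).mul
            ((hu_adapted j).measurable.mono (ℱ.le j) le_rfl)).aestronglyMeasurable
        · simp only [Real.norm_eq_abs, abs_mul]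
          calc |H n ω| * |u j ω| ≤ 1 * |u j ω| := by
                apply mul_le_mul_of_nonneg_right _ (abs_nonneg _)
                rw [abs_of_nonneg (hH_nonneg n ω)]; exact hH_le_one n ω
            _ = _ := one_mul _
      have hp_int : Integrable p μ := (hw_int n).sub (hHu_int n)
      have hq_int : Integrable (H n * u (n + 1)) μ := hHu_int (n + 1)
      have hsplit : w (n + 1) = p + H n * u (n + 1) := by
        funext ω
        simp only [hw_def, hp_def, Pi.add_apply, Pi.mul_apply, Finset.sum_range_succ]
        ring
      have h1 : μ[w (n + 1)|ℱ n] =ᵐ[μ] μ[p|ℱ n] + μ[H n * u (n + 1)|ℱ n] := by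
        rw [hsplit]; exact condExp_add hp_int hq_int _
      have h2 : μ[H n * u (n + 1)|ℱ n] =ᵐ[μ] H n * μ[u (n + 1)|ℱ n] :=
        condExp_mul_of_stronglyMeasurable_left (hH_meas n).stronglyMeasurable hq_int (hu_int (n + 1))
      have h3 : μ[p|ℱ n] = p := condExp_of_stronglyMeasurable (ℱ.le n) hp_sm hp_int
      filter_upwards [h1, h2, hu_cond n] with ω hω1 hω2 hω4
      rw [hω1, Pi.add_apply, hω2, h3, Pi.mul_apply]
      have hmul : H n ω * (μ[u (n + 1)|ℱ n]) ω ≤ H n ω * u n ω :=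
        mul_le_mul_of_nonneg_left hω4 (hH_nonneg n ω)
      simp only [hp_def]
      linarith
    have hw_super : Supermartingale w ℱ μ := supermartingale_nat hw_adapted hw_int hw_cond
    have hinv : ∀ ω n, ∃ m, m ≤ n ∧ w n ω = u m ω ∧ B m ω ≤ (M : ℝ) := by
      intro ω n
      induction n with
      | zero =>
        refine ⟨0, le_rfl, by simp [hw_def], ?_⟩
        simp only [hB_def, Finset.range_zero, Finset.sum_empty]
        exact Nat.cast_nonneg M
      | succ n ih =>
        by_cases h : B (n + 1) ω ≤ (M : ℝ)
        · refine ⟨n + 1, le_rfl, ?_, h⟩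
          refine hw_all1 (n + 1) ω fun k hk => ?_
          have hBk : B (k + 1) ω ≤ (M : ℝ) := le_trans (hB_mono ω (by omega)) h
          simp [hH_def, hBk]
        · obtain ⟨m, hm, hwm, hBm⟩ := ih
          refine ⟨m, by omega, ?_, hBm⟩
          have hH0 : H n ω = 0 := by simp [hH_def, h]
          calc w (n + 1) ω = w n ω + H n ω * (u (n + 1) ω - u n ω) := by
                simp only [hw_def, Finset.sum_range_succ]; ring
            _ = w n ω := by rw [hH0]; ring
            _ = u m ω := hwm
    have hw_lb : ∀ n ω, -(M : ℝ) ≤ w n ω := by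
      intro n ω
      obtain ⟨m, _, hwm, hBm⟩ := hinv ω n
      rw [hwm]
      linarith [hu_plus m ω]
    have hEw0 : ∫ ω, w 0 ω ∂μ = ∫ ω, v 0 ω ∂μ := by
      refine integral_congr_ae (Eventually.of_forall fun ω => ?_)
      simp [hw_def, hu0 ω]
    have hbnd : ∀ n, eLpNorm (w n) 1 μ ≤
        ENNReal.ofReal (∫ ω, v 0 ω ∂μ + 2 * M) := by
      intro n
      have hint : ∫ ω, |w n ω| ∂μ ≤ ∫ ω, v 0 ω ∂μ + 2 * M := by
        have hle : ∫ ω, |w n ω| ∂μ ≤ ∫ ω, (w n ω + 2 * M) ∂μ := by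
          refine integral_mono (hw_int n).abs ((hw_int n).add (integrable_const _))
            fun ω => ?_
          exact abs_le.2 ⟨by linarith [hw_lb n ω], by linarith [Nat.cast_nonneg (α := ℝ) M]⟩
        have h2 : ∫ ω, (w n ω + 2 * M) ∂μ = ∫ ω, w n ω ∂μ + 2 * M := by
          rw [integral_add (hw_int n) (integrable_const _), integral_const]
          simp
        have h3 : ∫ ω, w n ω ∂μ ≤ ∫ ω, w 0 ω ∂μ := by
          calc ∫ ω, w n ω ∂μ = ∫ ω, (μ[w n|ℱ 0]) ω ∂μ :=
                (integral_condExp (ℱ.le 0)).symm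
            _ ≤ ∫ ω, w 0 ω ∂μ :=
                integral_mono_ae integrable_condExp (hw_int 0)
                  (hw_super.condExp_ae_le (Nat.zero_le n))
        linarith
      calc eLpNorm (w n) 1 μ = ENNReal.ofReal (∫ ω, ‖w n ω‖ ∂μ) := by
            rw [eLpNorm_one_eq_lintegral_enorm,
              ← ofReal_integral_norm_eq_lintegral_enorm (hw_int n)]
        _ ≤ _ := ENNReal.ofReal_le_ofReal (by
            simpa only [Real.norm_eq_abs] using hint)
    have hconv : ∀ᵐ ω ∂μ, ∃ l, Tendsto (fun n => w n ω) atTop (nhds l) := by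
      have hsub : Submartingale (-w) ℱ μ := hw_super.neg
      have hbdd : ∀ n, eLpNorm ((-w) n) 1 μ ≤
          (Real.toNNReal (∫ ω, v 0 ω ∂μ + 2 * M) : ℝ≥0∞) := by
        intro n
        have heq : eLpNorm ((-w) n) 1 μ = eLpNorm (w n) 1 μ := eLpNorm_neg (w n) 1 μ
        rw [heq]
        exact hbnd n
      filter_upwards [hsub.exists_ae_tendsto_of_bdd hbdd] with ω hω
      obtain ⟨l, hl⟩ := hω
      refine ⟨-l, ?_⟩
      have := hl.neg
      simp only [Pi.neg_apply, neg_neg] at this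
      exact this
    filter_upwards [hconv] with ω hω hB
    obtain ⟨l, hl⟩ := hω
    refine ⟨l, ?_⟩
    have heq : ∀ n, u n ω = w n ω := by
      intro n
      refine (hw_all1 n ω fun k _ => ?_).symm
      simp [hH_def, hB k]
    simpa only [heq] using hl
  -- combine
  -- combine
  have key' : ∀ᵐ ω ∂μ, (Summable fun n => a n ω) ∧ (Summable fun n => b n ω) ∧
      ∀ M : ℕ, (∀ n, B (n + 1) ω ≤ M) → ∃ l, Tendsto (fun n => u n ω) atTop (nhds l) :=
    ha_sum.and (hb_sum.and (ae_all_iff.2 key))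
  filter_upwards [key'] with ω hω
  obtain ⟨haω, hbω, hkey⟩ := hω
  have hbA_sum : Summable fun k => b k ω / A (k + 1) ω := by
    refine Summable.of_nonneg_of_le
      (fun k => div_nonneg (hb_nonneg k ω) (hApos (k + 1) ω).le)
      (fun k => div_le_self (hb_nonneg k ω) (hA1 (k + 1) ω)) hbω
  have hB_le : ∀ n, B n ω ≤ ∑' k, b k ω / A (k + 1) ω := fun n =>
    Summable.sum_le_tsum (Finset.range n)
      (fun k _ => div_nonneg (hb_nonneg k ω) (hApos (k + 1) ω).le) hbA_sum
  obtain ⟨M, hM⟩ := exists_nat_ge (∑' k, b k ω / A (k + 1) ω)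
  obtain ⟨l, hl⟩ := hkey M fun n => le_trans (hB_le (n + 1)) hM
  -- convergence of the product A
  have hA_bdd : ∀ n, A n ω ≤ Real.exp (∑' k, a k ω) := by
    intro n
    calc A n ω ≤ ∏ k ∈ Finset.range n, Real.exp (a k ω) := by
          refine Finset.prod_le_prod (fun k _ => by linarith [ha_nonneg k ω]) fun k _ => ?_
          linarith [Real.add_one_le_exp (a k ω)]
      _ = Real.exp (∑ k ∈ Finset.range n, a k ω) := (Real.exp_sum _ _).symm
      _ ≤ Real.exp (∑' k, a k ω) :=
          Real.exp_le_exp.2 (Summable.sum_le_tsum _ (fun k _ => ha_nonneg k ω) haω)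
  have hAbdd : BddAbove (Set.range fun n => A n ω) :=
    ⟨Real.exp (∑' k, a k ω), Set.forall_mem_range.2 fun n => hA_bdd n⟩
  set Alim : ℝ := ⨆ n, A n ω with hAlim_def
  have hA_tend : Tendsto (fun n => A n ω) atTop (nhds Alim) :=
    tendsto_atTop_ciSup (hA_mono ω) hAbdd
  have hA_le : ∀ n, A n ω ≤ Alim := fun n => le_ciSup hAbdd n
  -- partial sum identity
  have hsplit_sum : ∀ n, ∑ k ∈ Finset.range n, (c k ω - b k ω) / A (k + 1) ω
      = (∑ k ∈ Finset.range n, c k ω / A (k + 1) ω) - B n ω := by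
    intro n
    simp only [hB_def]
    rw [← Finset.sum_sub_distrib]
    exact Finset.sum_congr rfl fun k _ => sub_div _ _ _
  -- summability of c / A
  obtain ⟨K, hK⟩ := hl.bddAbove_range
  have hcA_sum : Summable fun k => c k ω / A (k + 1) ω := by
    refine summable_of_sum_range_le
      (c := K + ∑' k, b k ω / A (k + 1) ω)
      (fun k => div_nonneg (hc_nonneg k ω) (hApos (k + 1) ω).le) fun n => ?_
    have h1 : u n ω = v n ω / A n ω
        + ((∑ k ∈ Finset.range n, c k ω / A (k + 1) ω) - B n ω) := by
      simp only [hu_def]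
      rw [hsplit_sum n]
    have h2 : u n ω ≤ K := hK ⟨n, rfl⟩
    have h3 : 0 ≤ v n ω / A n ω := div_nonneg (hv_nonneg n ω) (hApos n ω).le
    have h4 := hB_le n
    calc ∑ i ∈ Finset.range n, c i ω / A (i + 1) ω
        = u n ω - v n ω / A n ω + B n ω := by rw [h1]; ring
      _ ≤ K + ∑' k, b k ω / A (k + 1) ω :=
          add_le_add (le_trans (sub_le_self _ h3) h2) h4
  have hc_sum : Summable fun k => c k ω := by
    refine Summable.of_nonneg_of_le (fun k => hc_nonneg k ω) (fun k => ?_)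
      (hcA_sum.mul_right Alim)
    calc c k ω = c k ω / A (k + 1) ω * A (k + 1) ω :=
          (div_mul_cancel₀ _ (hApos (k + 1) ω).ne').symm
      _ ≤ c k ω / A (k + 1) ω * Alim :=
          mul_le_mul_of_nonneg_left (hA_le (k + 1))
            (div_nonneg (hc_nonneg k ω) (hApos (k + 1) ω).le)
  refine ⟨?_, hc_sum⟩
  -- convergence of v
  have hB_tend : Tendsto (fun n => B n ω) atTop (nhds (∑' k, b k ω / A (k + 1) ω)) :=
    hbA_sum.hasSum.tendsto_sum_nat
  have hC_tend : Tendsto (fun n => ∑ k ∈ Finset.range n, c k ω / A (k + 1) ω) atTop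
      (nhds (∑' k, c k ω / A (k + 1) ω)) := hcA_sum.hasSum.tendsto_sum_nat
  have hvA_tend : Tendsto (fun n => v n ω / A n ω) atTop
      (nhds (l - ((∑' k, c k ω / A (k + 1) ω) - ∑' k, b k ω / A (k + 1) ω))) := by
    refine (hl.sub (hC_tend.sub hB_tend)).congr fun n => ?_
    simp only [hu_def]
    rw [hsplit_sum n]
    ring
  refine ⟨(l - ((∑' k, c k ω / A (k + 1) ω) - ∑' k, b k ω / A (k + 1) ω)) * Alim, ?_⟩
  refine (hvA_tend.mul hA_tend).congr fun n => ?_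
  exact div_mul_cancel₀ _ (hApos n ω).ne'
end

section
/- Let {τ_n} be a nonnegative deterministic real sequence and {β_n} a nonnegative real-valued random sequence adapted to a filtration {F_n}. Assume Σ_{n=1}^∞ τ_n = ∞, E[Σ_{n=1}^∞ τ_n β_n] < ∞, and that there exists γ > 0 such that β_n − E[β_{n+1} | F_n] ≤ γ τ_n almost surely for all n. Then β_n converges to 0 almost surely. -/
open MeasureTheory Filter

/-- Let `τ` be a nonnegative deterministic sequence with `∑ τ n = ∞` and `β` a nonnegative
random sequence adapted to a filtration `ℱ` with `E[∑' n, τ n * β n] < ∞`. If there is `γ > 0`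
with `β n - E[β (n+1) | ℱ n] ≤ γ * τ n` a.s. for all `n`, then `β n → 0` almost surely. -/
theorem tendsto_zero_of_expected_weighted_sum_lt_top
    {Ω : Type*} {m0 : MeasurableSpace Ω} {μ : Measure Ω} [IsProbabilityMeasure μ]
    (ℱ : Filtration ℕ m0)
    (τ : ℕ → ℝ) (hτ_nonneg : ∀ n, 0 ≤ τ n) (hτ_div : ¬ Summable τ)
    (β : ℕ → Ω → ℝ) (hβ_nonneg : ∀ n ω, 0 ≤ β n ω) (hβ_adapted : Adapted ℱ β)
    (hβ_int : ∀ n, Integrable (β n) μ)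
    (hE : ∫⁻ ω, ∑' n, ENNReal.ofReal (τ n * β n ω) ∂μ < ⊤)
    (γ : ℝ) (hγ : 0 < γ)
    (hbias : ∀ n, ∀ᵐ ω ∂μ, β n ω - (μ[β (n + 1) | ℱ n]) ω ≤ γ * τ n) :
    ∀ᵐ ω ∂μ, Tendsto (fun n => β n ω) atTop (nhds 0) := by
  classical
  set f : ℕ → Ω → ℝ := fun n ω => τ n * β n ω with hf_def
  have hβ_meas : ∀ n, StronglyMeasurable[m0] (β n) := fun n => ((hβ_adapted n).mono (ℱ.le n) le_rfl).stronglyMeasurable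
  have hf_meas : ∀ n, Measurable (f n) := fun n =>
    measurable_const.mul (hβ_meas n).measurable
  have hf_nonneg : ∀ n ω, 0 ≤ f n ω := fun n ω => mul_nonneg (hτ_nonneg n) (hβ_nonneg n ω)
  have hF_meas : Measurable fun ω => ∑' n, ENNReal.ofReal (f n ω) :=
    Measurable.ennreal_tsum fun n => (hf_meas n).ennreal_ofReal
  have hfin : ∀ᵐ ω ∂μ, (∑' n, ENNReal.ofReal (f n ω)) < ⊤ := ae_lt_top hF_meas hE.ne
  have hsum : ∀ᵐ ω ∂μ, Summable fun n => f n ω := by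
    filter_upwards [hfin] with ω hω
    have := ENNReal.summable_toReal hω.ne
    simpa [ENNReal.toReal_ofReal, hf_nonneg _ ω] using this
  set g : Ω → ℝ := fun ω => (∑' n, ENNReal.ofReal (f n ω)).toReal with hg_def
  have hg_nonneg : ∀ ω, 0 ≤ g ω := fun ω => ENNReal.toReal_nonneg
  have hg_eq : ∀ᵐ ω ∂μ, g ω = ∑' n, f n ω := by
    filter_upwards [hsum] with ω hω
    rw [hg_def]
    simp only
    rw [← ENNReal.ofReal_tsum_of_nonneg (fun n => hf_nonneg n ω) hω,
      ENNReal.toReal_ofReal (tsum_nonneg fun n => hf_nonneg n ω)]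
  have hg_int : Integrable g μ := by
    refine ⟨(hF_meas.ennreal_toReal).aestronglyMeasurable, ?_⟩
    have hle : ∀ ω, (‖g ω‖₊ : ENNReal) ≤ ∑' n, ENNReal.ofReal (f n ω) := by
      intro ω
      rw [← enorm_eq_nnnorm, ← ofReal_norm, Real.norm_of_nonneg (hg_nonneg ω)]
      exact ENNReal.ofReal_toReal_le
    exact lt_of_le_of_lt (lintegral_mono fun ω => hle ω) hE
  have hgmeas : StronglyMeasurable[⨆ n, ℱ n] g := by
    have hβ' : ∀ n, Measurable[⨆ n, ℱ n] (β n) := fun n =>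
      ((hβ_adapted n).mono (le_iSup (fun n => ℱ n) n) le_rfl)
    exact (Measurable.ennreal_toReal (Measurable.ennreal_tsum fun n =>
      ((measurable_const.mul (hβ' n)).ennreal_ofReal))).stronglyMeasurable
  have hLevy : ∀ᵐ ω ∂μ, Tendsto (fun n => (μ[g|ℱ n]) ω) atTop (nhds (g ω)) :=
    hg_int.tendsto_ae_condExp hgmeas
  set P : ℕ → Ω → ℝ := fun n ω => ∑ m ∈ Finset.range n, f m ω with hP_def
  have hP_tendsto : ∀ᵐ ω ∂μ, Tendsto (fun n => P n ω) atTop (nhds (g ω)) := by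
    filter_upwards [hsum, hg_eq] with ω h1 h2
    rw [h2]
    exact h1.hasSum.tendsto_sum_nat
  have hP_sm : ∀ n, StronglyMeasurable[ℱ n] (P n) := by
    intro n
    apply Finset.stronglyMeasurable_fun_sum
    intro m hm
    exact (stronglyMeasurable_const.mul
      (((hβ_adapted m).mono (ℱ.mono (Finset.mem_range.mp hm).le) le_rfl).stronglyMeasurable))
  have hP_int : ∀ n, Integrable (P n) μ := fun n =>
    integrable_finset_sum _ fun m _ => (hβ_int m).const_mul _
  -- Step 1: iterated bias inequality
  have hL1 : ∀ n j, ∀ᵐ ω ∂μ,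
      β n ω ≤ (μ[β (n + j)|ℱ n]) ω + γ * ∑ k ∈ Finset.Ico n (n + j), τ k := by
    intro n j
    induction j with
    | zero =>
      simp only [Nat.add_zero]
      rw [condExp_of_stronglyMeasurable (ℱ.le n) (hβ_adapted n).stronglyMeasurable (hβ_int n)]
      simp
    | succ j ih =>
      have h1 : β (n + j) ≤ᵐ[μ]
          μ[β (n + j + 1)|ℱ (n + j)] + fun _ => γ * τ (n + j) := by
        filter_upwards [hbias (n + j)] with ω hω
        simp only [Pi.add_apply]
        linarith
      have h2 := condExp_mono (m := ℱ n) (hβ_int (n + j))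
        (integrable_condExp.add (integrable_const _)) h1
      have h3 := condExp_add (m := ℱ n) (μ := μ)
        (integrable_condExp (f := β (n + j + 1)) (m := ℱ (n + j))) (integrable_const (γ * τ (n + j)))
      have h4 := condExp_condExp_of_le (μ := μ) (f := β (n + j + 1))
        (ℱ.mono (Nat.le_add_right n j)) (ℱ.le (n + j))
      have h5 := condExp_const (μ := μ) (ℱ.le n) (γ * τ (n + j))
      filter_upwards [ih, h2, h3, h4] with ω hω1 hω2 hω3 hω4
      have h5' : (μ[(fun _ => γ * τ (n + j) : Ω → ℝ)|ℱ n]) ω = γ * τ (n + j) := by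
        rw [h5]
      rw [← Nat.add_assoc, Finset.sum_Ico_succ_top (Nat.le_add_right n j)]
      have := hω2.trans_eq (by simpa [Pi.add_apply, h5'] using hω3)
      calc β n ω ≤ (μ[β (n + j)|ℱ n]) ω + γ * ∑ k ∈ Finset.Ico n (n + j), τ k := hω1
        _ ≤ ((μ[μ[β (n + j + 1)|ℱ (n + j)]|ℱ n]) ω + γ * τ (n + j))
              + γ * ∑ k ∈ Finset.Ico n (n + j), τ k := by linarith
        _ = (μ[β (n + j + 1)|ℱ n]) ω + γ * (∑ k ∈ Finset.Ico n (n + j), τ k + τ (n + j)) := by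
              rw [hω4]; ring
  -- Step 2: weighted sum inequality
  have hL2 : ∀ n N, n ≤ N + 1 → ∀ᵐ ω ∂μ,
      (∑ m ∈ Finset.Ico n (N + 1), τ m) * β n ω ≤
        ((μ[g|ℱ n]) ω - P n ω) +
          γ * ∑ m ∈ Finset.Ico n (N + 1), τ m * ∑ k ∈ Finset.Ico n m, τ k := by
    intro n N hnN
    set s : Finset ℕ := Finset.Ico n (N + 1) with hs_def
    have h_each : ∀ m : ℕ, ∀ᵐ ω ∂μ, n ≤ m →
        τ m * β n ω ≤ τ m * (μ[β m|ℱ n]) ω + γ * (τ m * ∑ k ∈ Finset.Ico n m, τ k) := by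
      intro m
      rcases le_or_gt n m with h | h
      · obtain ⟨j, rfl⟩ := Nat.exists_eq_add_of_le h
        filter_upwards [hL1 n j] with ω hω _
        have h1 := mul_le_mul_of_nonneg_left hω (hτ_nonneg (n + j))
        calc τ (n + j) * β n ω
            ≤ τ (n + j) * ((μ[β (n + j)|ℱ n]) ω + γ * ∑ k ∈ Finset.Ico n (n + j), τ k) := h1
          _ = τ (n + j) * (μ[β (n + j)|ℱ n]) ω
              + γ * (τ (n + j) * ∑ k ∈ Finset.Ico n (n + j), τ k) := by ring
      · filter_upwards with ω hm; omega
    have h_sumineq : ∀ᵐ ω ∂μ,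
        (∑ m ∈ s, τ m) * β n ω ≤
          (∑ m ∈ s, τ m * (μ[β m|ℱ n]) ω)
          + γ * ∑ m ∈ s, τ m * ∑ k ∈ Finset.Ico n m, τ k := by
      filter_upwards [ae_all_iff.2 h_each] with ω hω
      rw [Finset.sum_mul, Finset.mul_sum, ← Finset.sum_add_distrib]
      exact Finset.sum_le_sum fun m hm => hω m (Finset.mem_Ico.mp hm).1
    have hwin_int : Integrable (∑ m ∈ s, f m) μ :=
      integrable_finset_sum' _ fun m _ => (hβ_int m).const_mul _
    have hce1 : ∀ᵐ ω ∂μ,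
        (μ[∑ m ∈ s, f m|ℱ n]) ω = ∑ m ∈ s, τ m * (μ[β m|ℱ n]) ω := by
      have hsm : ∀ m ∈ s, μ[f m|ℱ n] =ᵐ[μ] fun ω => τ m * (μ[β m|ℱ n]) ω := by
        intro m _
        have h := condExp_smul (μ := μ) (m := ℱ n) (τ m) (β m)
        have hfm : f m = τ m • β m := rfl
        rw [hfm]
        filter_upwards [h] with ω hω
        simpa [Pi.smul_apply, smul_eq_mul] using hω
      filter_upwards [condExp_finset_sum (μ := μ) (m := ℱ n)
        (fun m (_ : m ∈ s) => (hβ_int m).const_mul (τ m)),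
        (ae_ball_iff (Finset.countable_toSet s)).2 hsm] with ω h1 h2
      rw [h1, Finset.sum_apply]
      exact Finset.sum_congr rfl fun m hm => h2 m hm
    have hcomp : (∑ m ∈ s, f m) ≤ᵐ[μ] g - P n := by
      filter_upwards [hsum, hg_eq] with ω h1 h2
      simp only [Finset.sum_apply, Pi.sub_apply]
      have h3 : ∑ m ∈ Finset.range (N + 1), f m ω ≤ ∑' m, f m ω :=
        Summable.sum_le_tsum _ (fun i _ => hf_nonneg i ω) h1
      have h4 : ∑ m ∈ s, f m ω
          = ∑ m ∈ Finset.range (N + 1), f m ω - ∑ m ∈ Finset.range n, f m ω := by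
        rw [hs_def, Finset.sum_Ico_eq_sub _ hnN]
      rw [h4, h2]
      have h5 : P n ω = ∑ m ∈ Finset.range n, f m ω := rfl
      rw [h5]
      linarith
    have hce2 := condExp_mono (m := ℱ n) hwin_int (hg_int.sub (hP_int n)) hcomp
    have hce3 := condExp_sub (m := ℱ n) hg_int (hP_int n)
    have hce4 : μ[P n|ℱ n] = P n :=
      condExp_of_stronglyMeasurable (ℱ.le n) (hP_sm n) (hP_int n)
    filter_upwards [h_sumineq, hce1, hce2, hce3] with ω hω1 hω2 hω3 hω4
    have hω4' : (μ[g - P n|ℱ n]) ω = (μ[g|ℱ n]) ω - P n ω := by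
      rw [hω4]; simp [Pi.sub_apply, hce4]
    rw [← hω2] at hω1
    have := hω3.trans_eq hω4'
    linarith
  -- Step 3: choice of the window
  have hN : ∀ n : ℕ, ∀ ε : ℝ, 0 < ε → ∃ N : ℕ, n ≤ N ∧
      ε ≤ ∑ m ∈ Finset.Ico n (N + 1), τ m ∧
      ∀ m ∈ Finset.Ico n (N + 1), ∑ k ∈ Finset.Ico n m, τ k ≤ ε := by
    intro n ε hε
    have h1 := (not_summable_iff_tendsto_nat_atTop_of_nonneg hτ_nonneg).1 hτ_div
    have h2 : Tendsto (fun j => ∑ i ∈ Finset.Ico n j, τ i) atTop atTop := by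
      have h3 : Tendsto (fun j => (∑ i ∈ Finset.range j, τ i)
          - ∑ i ∈ Finset.range n, τ i) atTop atTop :=
        tendsto_atTop_add_const_right _ _ h1
      refine h3.congr' ?_
      filter_upwards [eventually_ge_atTop n] with j hj
      rw [Finset.sum_Ico_eq_sub _ hj]
    have hex : ∃ N : ℕ, ε ≤ ∑ m ∈ Finset.Ico n (N + 1), τ m := by
      obtain ⟨j, hj⟩ := (h2.eventually_ge_atTop ε).exists
      exact ⟨j, le_trans hj (Finset.sum_le_sum_of_subset_of_nonneg
        (Finset.Ico_subset_Ico le_rfl (Nat.le_succ j)) fun i _ _ => hτ_nonneg i)⟩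
    set N := Nat.find hex with hN_def
    have hspec : ε ≤ ∑ m ∈ Finset.Ico n (N + 1), τ m := Nat.find_spec hex
    have hnN : n ≤ N := by
      by_contra h
      push_neg at h
      have : Finset.Ico n (N + 1) = ∅ := by
        apply Finset.Ico_eq_empty
        omega
      rw [this] at hspec
      simp at hspec
      linarith
    have hsmall : ∑ k ∈ Finset.Ico n N, τ k ≤ ε := by
      rcases Nat.eq_zero_or_pos N with h0 | h0
      · have hIco : Finset.Ico n N = ∅ := Finset.Ico_eq_empty (by omega)
        rw [hIco]
        simpa using le_of_lt hε
      · obtain ⟨j, hj⟩ : ∃ j, N = j + 1 := ⟨N - 1, by omega⟩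
        have hmin := Nat.find_min hex (m := j) (by omega)
        push_neg at hmin
        rw [hj]
        exact le_of_lt hmin
    refine ⟨N, hnN, hspec, fun m hm => ?_⟩
    have hmN : m ≤ N := by
      have := (Finset.mem_Ico.mp hm).2; omega
    exact le_trans (Finset.sum_le_sum_of_subset_of_nonneg
      (Finset.Ico_subset_Ico le_rfl hmN) fun i _ _ => hτ_nonneg i) hsmall
  -- Step 4: the key a.e. bound
  have hkey : ∀ n : ℕ, ∀ k : ℕ, ∀ᵐ ω ∂μ,
      β n ω ≤ |(μ[g|ℱ n]) ω - P n ω| / (1 / (k + 1 : ℝ)) + γ * (1 / (k + 1 : ℝ)) := by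
    intro n k
    set ε : ℝ := 1 / (k + 1 : ℝ) with hε_def
    have hε : 0 < ε := by positivity
    obtain ⟨N, hnN, hT, hS⟩ := hN n ε hε
    set T : ℝ := ∑ m ∈ Finset.Ico n (N + 1), τ m with hT_def
    have hT0 : 0 < T := lt_of_lt_of_le hε hT
    filter_upwards [hL2 n N (by omega)] with ω hω
    set D : ℝ := (μ[g|ℱ n]) ω - P n ω with hD_def
    have hC : ∑ m ∈ Finset.Ico n (N + 1), τ m * ∑ k ∈ Finset.Ico n m, τ k ≤ ε * T := by
      rw [hT_def, Finset.mul_sum]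
      refine Finset.sum_le_sum fun m hm => ?_
      have := hS m hm
      have h1 : τ m * ∑ k ∈ Finset.Ico n m, τ k ≤ τ m * ε :=
        mul_le_mul_of_nonneg_left this (hτ_nonneg m)
      linarith [h1]
    have h1 : T * β n ω ≤ D + γ * (ε * T) := by
      have := mul_le_mul_of_nonneg_left hC (le_of_lt hγ)
      linarith
    have h2 : β n ω ≤ D / T + γ * ε := by
      have h2' : β n ω * T ≤ D + γ * ε * T := by
        linarith [h1, mul_comm (β n ω) T, mul_assoc γ ε T]
      calc β n ω ≤ (D + γ * ε * T) / T := (le_div_iff₀ hT0).2 h2'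
        _ = D / T + γ * ε := by
            rw [add_div, mul_div_assoc, div_self hT0.ne', mul_one]
    have h3 : D / T ≤ |D| / ε :=
      div_le_div₀ (abs_nonneg D) (le_abs_self D) hε hT
    linarith
  -- Step 5: conclude
  filter_upwards [hLevy, hP_tendsto, ae_all_iff.2 fun n => ae_all_iff.2 fun k => hkey n k]
    with ω hω1 hω2 hω3
  have hD : Tendsto (fun n => (μ[g|ℱ n]) ω - P n ω) atTop (nhds 0) := by
    simpa using hω1.sub hω2
  rw [Metric.tendsto_atTop]
  intro ε' hε'
  obtain ⟨k, hk⟩ := exists_nat_gt (2 * γ / ε')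
  have hk1 : (0 : ℝ) < k + 1 := by positivity
  have hγk : γ * (1 / (k + 1 : ℝ)) < ε' / 2 := by
    rw [mul_one_div, div_lt_iff₀ hk1]
    rw [div_lt_iff₀ hε'] at hk
    nlinarith
  have hsmallD : ∀ᶠ n in atTop,
      |(μ[g|ℱ n]) ω - P n ω| < (ε' / 2) * (1 / (k + 1 : ℝ)) := by
    have habs : Tendsto (fun n => |(μ[g|ℱ n]) ω - P n ω|) atTop (nhds 0) := by
      simpa using hD.abs
    exact habs.eventually_lt_const (by positivity)
  obtain ⟨M, hM⟩ := hsmallD.exists_forall_of_atTop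
  refine ⟨M, fun n hn => ?_⟩
  have h1 := hω3 n k
  have h2 := hM n hn
  have h3 : |(μ[g|ℱ n]) ω - P n ω| / (1 / (k + 1 : ℝ)) < ε' / 2 := by
    rw [div_lt_iff₀ (by positivity : (0:ℝ) < 1 / (k + 1 : ℝ))]
    linarith
  rw [Real.dist_eq, sub_zero, abs_of_nonneg (hβ_nonneg n ω)]
  linarith
end

section
/- Let H be a real Hilbert space, C ⊆ H a nonempty closed convex set, and π_C : H → C the metric projection onto C. Let j : H → ℝ be convex and Fréchet differentiable on an open neighborhood of C. On a probability space with filtration {F_n}, let {u_n} ⊂ C, {g_n} ⊂ H be random sequences with u_{n+1} = π_C(u_n − τ_n g_n) for deterministic step sizes τ_n ≥ 0, where g_n = ∇j(u_n) + w_n + r_n with E[w_n | F_n] = 0, u_n and r_n being F_n-measurable, and E[‖g_n‖² | F_n] ≤ M₁ + M₂‖u_n‖² almost surely for constants M₁, M₂ > 0. Then for every u ∈ C, setting M₃ := M₁ + 2M₂‖u‖² and M₄ := 2M₂, one has almost surely E[‖u_{n+1} − u‖² | F_n] ≤ ‖u_n − u‖²(1 + 2τ_n‖r_n‖ + τ_n²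 M₄) − 2τ_n (j(u_n) − j(u)) + 2τ_n‖r_n‖ + τ_n² M₃. -/
open MeasureTheory Filter

open Topology
open scoped InnerProductSpace


section Aux
variable {H : Type*} [NormedAddCommGroup H] [InnerProductSpace ℝ H] [CompleteSpace H]

/-- gradient inequality for convex functions -/
lemma psg_aux_grad_ineq {j : H → ℝ} (hj : ConvexOn ℝ Set.univ j) {x y gx : H}
    (hd : HasGradientAt j gx x) : ⟪gx, y - x⟫_ℝ ≤ j y - j x := by
  set φ : ℝ → ℝ := fun t => j (x + t • (y - x)) with hφdef
  have h0 : x + (0:ℝ) • (y - x) = x := by simp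
  have hline : HasDerivAt (fun t : ℝ => x + t • (y - x)) (y - x) 0 := by
    simpa using ((hasDerivAt_id (0:ℝ)).smul_const (y - x)).const_add x
  have hl : HasFDerivAt j (InnerProductSpace.toDual ℝ H gx) (x + (0:ℝ) • (y - x)) := by
    rw [h0]; exact hd.hasFDerivAt
  have hφ : HasDerivAt φ ⟪gx, y - x⟫_ℝ 0 := by
    have := hl.comp_hasDerivAt 0 hline
    simp only [InnerProductSpace.toDual_apply_apply] at this
    exact this
  have hmem : Set.Ioc (0:ℝ) 1 ∈ 𝓝[>] (0:ℝ) :=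
    Ioc_mem_nhdsGT_of_mem ⟨le_refl _, zero_lt_one⟩
  have hkey : ∀ t ∈ Set.Ioc (0:ℝ) 1, slope φ 0 t ≤ j y - j x := by
    intro t ht
    have hconv := hj.2 (Set.mem_univ x) (Set.mem_univ y)
      (by linarith [ht.2] : (0:ℝ) ≤ 1 - t) ht.1.le (by ring)
    have heq : x + t • (y - x) = (1 - t) • x + t • y := by module
    have hφt : φ t ≤ (1 - t) * j x + t * j y := by
      rw [hφdef]; simp only [heq]; simpa [smul_eq_mul] using hconv
    have hφ0 : φ 0 = j x := by simp [hφdef]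
    rw [slope_def_field, hφ0, sub_zero, div_le_iff₀ ht.1]
    nlinarith [ht.1]
  have htendsto : Tendsto (slope φ 0) (𝓝[>] (0:ℝ)) (𝓝 ⟪gx, y - x⟫_ℝ) :=
    (hasDerivAt_iff_tendsto_slope.mp hφ).mono_left
      (nhdsWithin_mono 0 (fun t ht => (ne_of_gt ht : t ≠ 0)))
  exact le_of_tendsto htendsto (Filter.eventually_of_mem hmem hkey)

/-- squared-distance nonexpansiveness of the metric projection -/
lemma psg_aux_proj_sq_le {C : Set H} (hC_convex : Convex ℝ C)
    {proj : H → H} (hproj_mem : ∀ x, proj x ∈ C)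
    (hproj : ∀ x, ∀ w ∈ C, ‖x - proj x‖ ≤ ‖x - w‖)
    (x : H) {u₀ : H} (hu₀ : u₀ ∈ C) : ‖proj x - u₀‖ ^ 2 ≤ ‖x - u₀‖ ^ 2 := by
  set p := proj x with hp
  have hvar : ⟪x - p, u₀ - p⟫_ℝ ≤ 0 := by
    have hkey : ∀ t ∈ Set.Ioc (0:ℝ) 1, 2 * ⟪x - p, u₀ - p⟫_ℝ ≤ t * ‖u₀ - p‖ ^ 2 := by
      intro t ht
      have hmem : p + t • (u₀ - p) ∈ C := by
        have h1 := hC_convex (hproj_mem x) hu₀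
          (by linarith [ht.2] : (0:ℝ) ≤ 1 - t) ht.1.le (by ring)
        have heq : p + t • (u₀ - p) = (1 - t) • p + t • u₀ := by module
        rwa [heq]
      have h2 := hproj x _ hmem
      have h3 : ‖x - p‖ ^ 2 ≤ ‖x - (p + t • (u₀ - p))‖ ^ 2 := by
        have := mul_self_le_mul_self (norm_nonneg _) h2
        nlinarith
      have h4 : x - (p + t • (u₀ - p)) = (x - p) - t • (u₀ - p) := by abel
      have h4' : ‖(x - p) - t • (u₀ - p)‖ ^ 2
          = ‖x - p‖ ^ 2 - 2 * (t * ⟪x - p, u₀ - p⟫_ℝ) + t ^ 2 * ‖u₀ - p‖ ^ 2 := by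
        rw [norm_sub_sq_real, real_inner_smul_right, norm_smul,
          Real.norm_eq_abs, mul_pow, sq_abs]
      rw [h4, h4'] at h3
      have h5 : t * (2 * ⟪x - p, u₀ - p⟫_ℝ) ≤ t * (t * ‖u₀ - p‖ ^ 2) := by nlinarith
      exact le_of_mul_le_mul_left h5 ht.1
    have hcont : Continuous (fun t : ℝ => t * ‖u₀ - p‖ ^ 2) := by fun_prop
    have htend : Tendsto (fun t : ℝ => t * ‖u₀ - p‖ ^ 2) (𝓝[>] (0:ℝ)) (𝓝 0) := by
      have h := (hcont.tendsto (0:ℝ)).mono_left (nhdsWithin_le_nhds (s := Set.Ioi (0:ℝ)))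
      simpa using h
    have h6 : 2 * ⟪x - p, u₀ - p⟫_ℝ ≤ 0 :=
      ge_of_tendsto htend (Filter.eventually_of_mem
        (Ioc_mem_nhdsGT_of_mem ⟨le_refl _, zero_lt_one⟩) hkey)
    linarith
  have h7 : x - u₀ = (x - p) + (p - u₀) := by abel
  have h8 : ‖x - u₀‖ ^ 2 = ‖x - p‖ ^ 2 + 2 * ⟪x - p, p - u₀⟫_ℝ + ‖p - u₀‖ ^ 2 := by
    rw [h7, norm_add_sq_real]
  have h9 : ⟪x - p, p - u₀⟫_ℝ = - ⟪x - p, u₀ - p⟫_ℝ := by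
    rw [← inner_neg_right]; rw [neg_sub]
  linarith [sq_nonneg ‖x - p‖]

end Aux


section Aux2
variable {H : Type*} [NormedAddCommGroup H] [InnerProductSpace ℝ H] [CompleteSpace H]

lemma psg_aux_sets_meas {Ω : Type*} {m : MeasurableSpace Ω} {Y c vn : Ω → ℝ}
    (hY : Measurable[m] Y) (hc : Measurable[m] c) (hv : Measurable[m] vn) (k : ℝ) :
    MeasurableSet[m] ({ω | Y ω < c ω} ∩ {ω | vn ω ≤ k} ∩ {ω | |c ω| ≤ k}) :=
  ((measurableSet_lt hY hc).inter (measurableSet_le hv measurable_const)).inter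
    (measurableSet_le hc.abs measurable_const)
/-- If `E[w | m] = 0` then `∫ ⟪z, w⟫ = 0` for bounded `m`-measurable `z`. -/
lemma psg_aux_integral_inner_zero {Ω : Type*} {m m0 : MeasurableSpace Ω}
    {μ : Measure Ω} (hm : m ≤ m0)
    [SigmaFinite (μ.trim hm)]
    {w : Ω → H} (hw_int : Integrable w μ) (hw_mean : μ[w|m] =ᵐ[μ] 0)
    {z : Ω → H} (hz : StronglyMeasurable[m] z) {k : ℝ} (hk : 0 ≤ k)
    (hzk : ∀ ω, ‖z ω‖ ≤ k) : ∫ ω, ⟪z ω, w ω⟫_ℝ ∂μ = 0 := by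
  have hset : ∀ s, MeasurableSet[m] s → ∫ ω in s, w ω ∂μ = 0 := by
    intro s hs
    rw [← setIntegral_condExp hm hw_int hs]
    calc ∫ ω in s, (μ[w|m]) ω ∂μ = ∫ ω in s, (0 : Ω → H) ω ∂μ :=
          setIntegral_congr_ae (hm s hs) (hw_mean.mono fun ω hω _ => hω)
      _ = 0 := by simp
  have hint : ∀ f : @SimpleFunc Ω m H, Integrable (fun ω => ⟪f ω, w ω⟫_ℝ) μ := by
    intro f
    obtain ⟨Cf, hCf⟩ := @SimpleFunc.exists_forall_norm_le Ω H m _ f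
    refine Integrable.mono' (hw_int.norm.const_mul Cf)
      (((f.stronglyMeasurable.mono hm).aestronglyMeasurable).inner hw_int.1)
      (ae_of_all _ fun ω => ?_)
    rw [Real.norm_eq_abs]
    calc |⟪f ω, w ω⟫_ℝ| ≤ ‖f ω‖ * ‖w ω‖ := abs_real_inner_le_norm _ _
      _ ≤ Cf * ‖w ω‖ := mul_le_mul_of_nonneg_right (hCf ω) (norm_nonneg _)
  have hsimple : ∀ f : @SimpleFunc Ω m H, ∫ ω, ⟪f ω, w ω⟫_ℝ ∂μ = 0 := by
    intro f
    refine @SimpleFunc.induction Ω H m _ (fun f => ∫ ω, ⟪f ω, w ω⟫_ℝ ∂μ = 0) ?_ ?_ f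
    · intro c s hs
      have heq : (fun ω => ⟪(@SimpleFunc.piecewise Ω H m s hs (@SimpleFunc.const Ω H m c)
          (@SimpleFunc.const Ω H m 0)) ω, w ω⟫_ℝ)
          = s.indicator (fun ω => ⟪c, w ω⟫_ℝ) := by
        funext ω
        by_cases h : ω ∈ s <;>
          simp [SimpleFunc.piecewise_apply, h, Set.indicator_of_mem,
            Set.indicator_of_notMem]
      rw [heq, integral_indicator (hm s hs), integral_inner hw_int.integrableOn c,
        hset s hs, inner_zero_right]
    · intro f₁ f₂ _ h1 h2
      have heq : (fun ω => ⟪(f₁ + f₂) ω, w ω⟫_ℝ)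
          = fun ω => ⟪f₁ ω, w ω⟫_ℝ + ⟪f₂ ω, w ω⟫_ℝ := by
        funext ω; simp [inner_add_left]
      rw [heq, integral_add (hint f₁) (hint f₂)]
      simp only [h1, h2, add_zero]
  have hmeas : ∀ n, AEStronglyMeasurable (fun ω => ⟪hz.approxBounded k n ω, w ω⟫_ℝ) μ :=
    fun n => (((hz.approxBounded k n).stronglyMeasurable.mono hm).aestronglyMeasurable).inner
      hw_int.1
  have hlim : Tendsto (fun n => ∫ ω, ⟪hz.approxBounded k n ω, w ω⟫_ℝ ∂μ) atTop
      (𝓝 (∫ ω, ⟪z ω, w ω⟫_ℝ ∂μ)) := by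
    refine tendsto_integral_of_dominated_convergence (fun ω => k * ‖w ω‖) hmeas
      (hw_int.norm.const_mul k) (fun n => ae_of_all _ fun ω => ?_)
      (ae_of_all _ fun ω => ?_)
    · rw [Real.norm_eq_abs]
      calc |⟪hz.approxBounded k n ω, w ω⟫_ℝ| ≤ ‖hz.approxBounded k n ω‖ * ‖w ω‖ :=
            abs_real_inner_le_norm _ _
        _ ≤ k * ‖w ω‖ :=
            mul_le_mul_of_nonneg_right (hz.norm_approxBounded_le hk n ω) (norm_nonneg _)
    · exact (hz.tendsto_approxBounded_of_norm_le (hzk ω)).inner tendsto_const_nhds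
  have hzero : ∀ n, ∫ ω, ⟪hz.approxBounded k n ω, w ω⟫_ℝ ∂μ = 0 :=
    fun n => hsimple (hz.approxBounded k n)
  simp only [hzero] at hlim
  exact (tendsto_nhds_unique tendsto_const_nhds hlim).symm

/-- conditional-expectation lower bound via a martingale-difference term -/
lemma psg_aux_condexp_ge {Ω : Type*} {m m0 : MeasurableSpace Ω}
    {μ : Measure Ω} [IsFiniteMeasure μ] (hm : m ≤ m0)
    {w v : Ω → H} {X c : Ω → ℝ}
    (hw_int : Integrable w μ) (hw_mean : μ[w|m] =ᵐ[μ] 0)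
    (hv : StronglyMeasurable[m] v) (hc : StronglyMeasurable[m] c)
    (hX : Integrable X μ)
    (hXc : ∀ ω, c ω + ⟪v ω, w ω⟫_ℝ ≤ X ω) :
    c ≤ᵐ[μ] μ[X|m] := by
  have hwv_meas : AEStronglyMeasurable (fun ω => ⟪v ω, w ω⟫_ℝ) μ :=
    ((hv.mono hm).aestronglyMeasurable).inner hw_int.1
  have hYm : StronglyMeasurable[m] (μ[X|m]) := stronglyMeasurable_condExp
  set s : ℕ → Set Ω := fun k =>
    {ω | (μ[X|m]) ω < c ω} ∩ {ω | ‖v ω‖ ≤ (k : ℝ)} ∩ {ω | |c ω| ≤ (k : ℝ)} with hs_def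
  have hs : ∀ k, MeasurableSet[m] (s k) := by
    intro k
    exact psg_aux_sets_meas hYm.measurable hc.measurable hv.norm.measurable (k : ℝ)
  have hind_eq : ∀ k ω, ⟪((s k).indicator v) ω, w ω⟫_ℝ
      = (s k).indicator (fun ω => ⟪v ω, w ω⟫_ℝ) ω := by
    intro k ω
    by_cases h : ω ∈ s k <;> simp [Set.indicator_of_mem, Set.indicator_of_notMem, h]
  have hzero : ∀ k, ∫ ω in s k, ⟪v ω, w ω⟫_ℝ ∂μ = 0 := by
    intro k
    have hbd : ∀ ω, ‖((s k).indicator v) ω‖ ≤ (k : ℝ) := by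
      intro ω
      by_cases h : ω ∈ s k
      · rw [Set.indicator_of_mem h]; exact h.1.2
      · rw [Set.indicator_of_notMem h, norm_zero]; exact Nat.cast_nonneg k
    have h2 := psg_aux_integral_inner_zero hm hw_int hw_mean (hv.indicator (hs k))
      (Nat.cast_nonneg k) hbd
    rw [← integral_indicator (hm _ (hs k)), ← h2]
    exact integral_congr_ae (ae_of_all _ fun ω => (hind_eq k ω).symm)
  have hint_wv : ∀ k, IntegrableOn (fun ω => ⟪v ω, w ω⟫_ℝ) (s k) μ := by
    intro k
    rw [← integrable_indicator_iff (hm _ (hs k))]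
    refine Integrable.mono' (hw_int.norm.const_mul k)
      (hwv_meas.indicator (hm _ (hs k))) (ae_of_all _ fun ω => ?_)
    by_cases h : ω ∈ s k
    · rw [Set.indicator_of_mem h, Real.norm_eq_abs]
      calc |⟪v ω, w ω⟫_ℝ| ≤ ‖v ω‖ * ‖w ω‖ := abs_real_inner_le_norm _ _
        _ ≤ k * ‖w ω‖ := mul_le_mul_of_nonneg_right h.1.2 (norm_nonneg _)
    · rw [Set.indicator_of_notMem h]
      simp only [norm_zero]
      positivity
  have hμs : ∀ k, μ (s k) = 0 := by
    intro k
    have hc_int : IntegrableOn c (s k) μ := by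
      refine Integrable.mono' (integrable_const (k : ℝ))
        ((hc.mono hm).aestronglyMeasurable.restrict) ?_
      filter_upwards [ae_restrict_mem (hm _ (hs k))] with ω hω
      simpa [Real.norm_eq_abs] using hω.2
    have hle1 : ∫ ω in s k, c ω ∂μ ≤ ∫ ω in s k, (X ω - ⟪v ω, w ω⟫_ℝ) ∂μ := by
      refine setIntegral_mono_on hc_int (hX.integrableOn.sub (hint_wv k))
        (hm _ (hs k)) fun ω _ => by linarith [hXc ω]
    have hle2 : ∫ ω in s k, (X ω - ⟪v ω, w ω⟫_ℝ) ∂μ = ∫ ω in s k, X ω ∂μ := by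
      rw [integral_sub hX.integrableOn (hint_wv k), hzero k, sub_zero]
    have hYX : ∫ ω in s k, (μ[X|m]) ω ∂μ = ∫ ω in s k, X ω ∂μ :=
      setIntegral_condExp hm hX (hs k)
    have hcY : ∫ ω in s k, (c ω - (μ[X|m]) ω) ∂μ ≤ 0 := by
      rw [integral_sub hc_int integrable_condExp.integrableOn]
      linarith
    have hnonneg : 0 ≤ᵐ[μ.restrict (s k)] fun ω => c ω - (μ[X|m]) ω := by
      filter_upwards [ae_restrict_mem (hm _ (hs k))] with ω hω
      have h3 : (μ[X|m]) ω < c ω := hω.1.1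
      simp only [Pi.zero_apply]
      linarith
    have heq0 : ∫ ω in s k, (c ω - (μ[X|m]) ω) ∂μ = 0 :=
      le_antisymm hcY (integral_nonneg_of_ae hnonneg)
    have hae0 := (integral_eq_zero_iff_of_nonneg_ae hnonneg
      (hc_int.sub integrable_condExp.integrableOn)).mp heq0
    have hfalse : ∀ᵐ ω ∂(μ.restrict (s k)), False := by
      filter_upwards [hae0, ae_restrict_mem (hm _ (hs k))] with ω h1 h2
      have h3 : (μ[X|m]) ω < c ω := h2.1.1
      have h4 : c ω - (μ[X|m]) ω = 0 := h1
      linarith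
    have hbot : μ.restrict (s k) = 0 :=
      ae_eq_bot.mp (Filter.eventually_false_iff_eq_bot.mp hfalse)
    exact Measure.restrict_eq_zero.mp hbot
  have hsub : {ω | ¬ c ω ≤ (μ[X|m]) ω} ⊆ ⋃ k, s k := by
    intro ω hω
    simp only [Set.mem_setOf_eq, not_le] at hω
    have hceil := Nat.le_ceil (max ‖v ω‖ |c ω|)
    refine Set.mem_iUnion.mpr ⟨⌈max ‖v ω‖ |c ω|⌉₊, ⟨⟨hω, ?_⟩, ?_⟩⟩
    · exact le_trans (le_max_left ‖v ω‖ |c ω|) hceil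
    · exact le_trans (le_max_right ‖v ω‖ |c ω|) hceil
  rw [Filter.EventuallyLE, ae_iff]
  exact measure_mono_null hsub (measure_iUnion_null hμs)

end Aux2

set_option maxHeartbeats 1000000

/-- One-step inequality for the projected stochastic gradient method: for every `u ∈ C`,
with `M₃ := M₁ + 2 M₂ ‖u‖²` and `M₄ := 2 M₂`, almost surely
`E[‖u_{n+1} - u‖² | ℱ n] ≤ ‖u_n - u‖² (1 + 2 τ_n ‖r_n‖ + τ_n² M₄)
  - 2 τ_n (j(u_n) - j(u)) + 2 τ_n ‖r_n‖ + τ_n² M₃`. -/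
theorem psg_one_step_inequality
    {H : Type*} [NormedAddCommGroup H] [InnerProductSpace ℝ H] [CompleteSpace H]
    {Ω : Type*} {m0 : MeasurableSpace Ω} {μ : Measure Ω} [IsProbabilityMeasure μ]
    (ℱ : Filtration ℕ m0)
    -- the closed convex constraint set and its metric projection
    (C : Set H) (hC_ne : C.Nonempty) (hC_closed : IsClosed C) (hC_convex : Convex ℝ C)
    (proj : H → H) (hproj_mem : ∀ x, proj x ∈ C)
    (hproj : ∀ x, ∀ w ∈ C, ‖x - proj x‖ ≤ ‖x - w‖)
    -- the objective: convex, Fréchet differentiable (with gradient `j'`) near `C`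
    (j : H → ℝ) (j' : H → H) (hj_convex : ConvexOn ℝ Set.univ j)
    (hj_diff : ∃ U : Set H, IsOpen U ∧ C ⊆ U ∧ ∀ x ∈ U, HasGradientAt j (j' x) x)
    -- the iterates, stochastic gradients and their decomposition
    (τ : ℕ → ℝ) (hτ_nonneg : ∀ n, 0 ≤ τ n)
    (u g w r : ℕ → Ω → H)
    (hu_mem : ∀ n ω, u n ω ∈ C)
    (hupdate : ∀ n ω, u (n + 1) ω = proj (u n ω - τ n • g n ω))
    (hdecomp : ∀ n ω, g n ω = j' (u n ω) + w n ω + r n ω)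
    (hu_meas : ∀ n, StronglyMeasurable[ℱ n] (u n))
    (hr_meas : ∀ n, StronglyMeasurable[ℱ n] (r n))
    (hw_mean : ∀ n, μ[w n | ℱ n] =ᵐ[μ] 0)
    -- integrability
    (hg_int : ∀ n, Integrable (g n) μ) (hw_int : ∀ n, Integrable (w n) μ)
    (hg_sq_int : ∀ n, Integrable (fun ω => ‖g n ω‖ ^ 2) μ)
    (hu_sq_int : ∀ n u₀, Integrable (fun ω => ‖u n ω - u₀‖ ^ 2) μ)
    -- growth condition for the second moment of the stochastic gradient
    (M₁ M₂ : ℝ) (hM₁ : 0 < M₁) (hM₂ : 0 < M₂)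
    (hgrowth : ∀ n, ∀ᵐ ω ∂μ,
      (μ[fun ω' => ‖g n ω'‖ ^ 2 | ℱ n]) ω ≤ M₁ + M₂ * ‖u n ω‖ ^ 2) :
    ∀ u₀ ∈ C, ∀ n, ∀ᵐ ω ∂μ,
      (μ[fun ω' => ‖u (n + 1) ω' - u₀‖ ^ 2 | ℱ n]) ω ≤
        ‖u n ω - u₀‖ ^ 2 * (1 + 2 * τ n * ‖r n ω‖ + τ n ^ 2 * (2 * M₂))
          - 2 * τ n * (j (u n ω) - j u₀) + 2 * τ n * ‖r n ω‖
          + τ n ^ 2 * (M₁ + 2 * M₂ * ‖u₀‖ ^ 2) := by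
  obtain ⟨U, hUopen, hCU, hUdiff⟩ := hj_diff
  intro u₀ hu₀C n
  have hm : ℱ n ≤ m0 := ℱ.le n
  -- measurability facts
  have hv_meas : StronglyMeasurable[ℱ n] (fun ω => u n ω - u₀) :=
    (hu_meas n).sub stronglyMeasurable_const
  have ha_meas : StronglyMeasurable[ℱ n] (fun ω => ‖u n ω - u₀‖ ^ 2) := by
    have h1 : (fun ω => ‖u n ω - u₀‖ ^ 2)
        = fun ω => ‖u n ω - u₀‖ * ‖u n ω - u₀‖ := by funext ω; ring
    rw [h1]
    exact hv_meas.norm.mul hv_meas.norm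
  have hju : StronglyMeasurable[ℱ n] (fun ω => j (u n ω)) := by
    refine ⟨fun k => @SimpleFunc.map Ω H ℝ (ℱ n) j ((hu_meas n).approx k), fun ω => ?_⟩
    have h1 := (hu_meas n).tendsto_approx ω
    have h2 : ContinuousAt j (u n ω) :=
      (hUdiff _ (hCU (hu_mem n ω))).hasFDerivAt.continuousAt
    simpa [SimpleFunc.coe_map, Function.comp_def] using h2.tendsto.comp h1
  have hc_meas : StronglyMeasurable[ℱ n]
      (fun ω => (j (u n ω) - j u₀) - ‖r n ω‖ * ‖u n ω - u₀‖) :=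
    (hju.sub stronglyMeasurable_const).sub ((hr_meas n).norm.mul hv_meas.norm)
  -- integrability of the inner-product term
  have hq_meas : AEStronglyMeasurable (fun ω => ⟪u n ω - u₀, g n ω⟫_ℝ) μ :=
    ((hv_meas.mono hm).aestronglyMeasurable).inner (hg_int n).1
  have hq_int : Integrable (fun ω => ⟪u n ω - u₀, g n ω⟫_ℝ) μ := by
    refine Integrable.mono' ((hu_sq_int n u₀).add (hg_sq_int n)) hq_meas
      (ae_of_all _ fun ω => ?_)
    simp only [Pi.add_apply]
    rw [Real.norm_eq_abs]
    nlinarith [abs_real_inner_le_norm (u n ω - u₀) (g n ω),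
      sq_nonneg (‖u n ω - u₀‖ - ‖g n ω‖), abs_nonneg (⟪u n ω - u₀, g n ω⟫_ℝ)]
  have hB1_int : Integrable ((-(2 * τ n)) • fun ω => ⟪u n ω - u₀, g n ω⟫_ℝ) μ :=
    hq_int.smul (-(2 * τ n))
  have hB2_int : Integrable ((τ n ^ 2) • fun ω => ‖g n ω‖ ^ 2) μ :=
    (hg_sq_int n).smul (τ n ^ 2)
  have hB_int : Integrable ((fun ω => ‖u n ω - u₀‖ ^ 2)
      + ((-(2 * τ n)) • (fun ω => ⟪u n ω - u₀, g n ω⟫_ℝ)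
        + (τ n ^ 2) • fun ω => ‖g n ω‖ ^ 2)) μ :=
    (hu_sq_int n u₀).add (hB1_int.add hB2_int)
  -- pointwise inequality after projection
  have hAB : (fun ω => ‖u (n + 1) ω - u₀‖ ^ 2) ≤ᵐ[μ]
      ((fun ω => ‖u n ω - u₀‖ ^ 2)
        + ((-(2 * τ n)) • (fun ω => ⟪u n ω - u₀, g n ω⟫_ℝ)
          + (τ n ^ 2) • fun ω => ‖g n ω‖ ^ 2)) := by
    refine ae_of_all _ fun ω => ?_
    have h1 : ‖u (n + 1) ω - u₀‖ ^ 2 ≤ ‖(u n ω - u₀) - τ n • g n ω‖ ^ 2 := by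
      rw [hupdate n ω]
      have h2 := psg_aux_proj_sq_le hC_convex hproj_mem hproj
        (u n ω - τ n • g n ω) hu₀C
      have h3 : u n ω - τ n • g n ω - u₀ = (u n ω - u₀) - τ n • g n ω := by abel
      rwa [h3] at h2
    have h4 : ‖(u n ω - u₀) - τ n • g n ω‖ ^ 2
        = ‖u n ω - u₀‖ ^ 2 - 2 * (τ n * ⟪u n ω - u₀, g n ω⟫_ℝ)
          + τ n ^ 2 * ‖g n ω‖ ^ 2 := by
      rw [norm_sub_sq_real, real_inner_smul_right, norm_smul, Real.norm_eq_abs,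
        mul_pow, sq_abs]
    simp only [Pi.add_apply, Pi.smul_apply, smul_eq_mul]
    linarith
  have hstep1 := condExp_mono (m := ℱ n) (hu_sq_int (n + 1) u₀) hB_int hAB
  have e1 := condExp_add (m := ℱ n) (μ := μ) (hu_sq_int n u₀) (hB1_int.add hB2_int)
  have e2 := condExp_add (m := ℱ n) (μ := μ) hB1_int hB2_int
  have e3 := condExp_smul (m := ℱ n) (μ := μ) (-(2 * τ n))
    (fun ω => ⟪u n ω - u₀, g n ω⟫_ℝ)
  have e4 := condExp_smul (m := ℱ n) (μ := μ) (τ n ^ 2) (fun ω => ‖g n ω‖ ^ 2)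
  have e5 : μ[(fun ω => ‖u n ω - u₀‖ ^ 2)|ℱ n] = fun ω => ‖u n ω - u₀‖ ^ 2 :=
    condExp_of_stronglyMeasurable hm ha_meas (hu_sq_int n u₀)
  -- the conditional expectation of the inner product term is bounded below
  have hXc : ∀ ω, ((j (u n ω) - j u₀) - ‖r n ω‖ * ‖u n ω - u₀‖)
      + ⟪u n ω - u₀, w n ω⟫_ℝ ≤ ⟪u n ω - u₀, g n ω⟫_ℝ := by
    intro ω
    have hd := hUdiff (u n ω) (hCU (hu_mem n ω))
    have hgrad := psg_aux_grad_ineq hj_convex (y := u₀) hd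
    have hsplit : ⟪u n ω - u₀, g n ω⟫_ℝ
        = ⟪u n ω - u₀, j' (u n ω)⟫_ℝ + ⟪u n ω - u₀, w n ω⟫_ℝ
          + ⟪u n ω - u₀, r n ω⟫_ℝ := by
      rw [hdecomp n ω, inner_add_right, inner_add_right]
    have hcomm : ⟪u n ω - u₀, j' (u n ω)⟫_ℝ = - ⟪j' (u n ω), u₀ - u n ω⟫_ℝ := by
      rw [real_inner_comm, ← inner_neg_right, neg_sub]
    have hr2 := abs_le.mp (abs_real_inner_le_norm (u n ω - u₀) (r n ω))
    have hmc : ‖u n ω - u₀‖ * ‖r n ω‖ = ‖r n ω‖ * ‖u n ω - u₀‖ := mul_comm _ _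
    rw [hsplit, hcomm]
    linarith [hr2.1, hr2.2, hgrad]
  have hq_ge := psg_aux_condexp_ge hm (hw_int n) (hw_mean n) hv_meas hc_meas
    hq_int hXc
  -- combine everything
  filter_upwards [hstep1, e1, e2, e3, e4, hq_ge, hgrowth n]
    with ω h1 h2 h3 h4 h5 h6 h7
  have ha : (μ[(fun ω => ‖u n ω - u₀‖ ^ 2)|ℱ n]) ω = ‖u n ω - u₀‖ ^ 2 := by rw [e5]
  simp only [Pi.add_apply, Pi.smul_apply, smul_eq_mul] at h1 h2 h3 h4 h5
  have hstep2 : (μ[fun ω' => ‖u (n + 1) ω' - u₀‖ ^ 2|ℱ n]) ω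
      ≤ ‖u n ω - u₀‖ ^ 2
        + (-(2 * τ n) * (μ[fun ω => ⟪u n ω - u₀, g n ω⟫_ℝ|ℱ n]) ω
          + τ n ^ 2 * (μ[fun ω => ‖g n ω‖ ^ 2|ℱ n]) ω) := by
    linarith [h1, h2, h3, h4, h5, ha]
  have hτ := hτ_nonneg n
  have hR : (0:ℝ) ≤ ‖r n ω‖ := norm_nonneg _
  have hV : (0:ℝ) ≤ ‖u n ω - u₀‖ := norm_nonneg _
  have hq2 : -(2 * τ n) * (μ[fun ω => ⟪u n ω - u₀, g n ω⟫_ℝ|ℱ n]) ω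
      ≤ -(2 * τ n) * ((j (u n ω) - j u₀) - ‖r n ω‖ * ‖u n ω - u₀‖) := by
    nlinarith [mul_nonneg hτ (sub_nonneg.mpr h6)]
  have hG2 : τ n ^ 2 * (μ[fun ω => ‖g n ω‖ ^ 2|ℱ n]) ω
      ≤ τ n ^ 2 * (M₁ + M₂ * ‖u n ω‖ ^ 2) := by
    nlinarith [mul_nonneg (sq_nonneg (τ n)) (sub_nonneg.mpr h7)]
  have hub : ‖u n ω‖ ≤ ‖u n ω - u₀‖ + ‖u₀‖ := by
    simpa using norm_add_le (u n ω - u₀) u₀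
  have hub2 : ‖u n ω‖ ^ 2 ≤ 2 * ‖u n ω - u₀‖ ^ 2 + 2 * ‖u₀‖ ^ 2 := by
    nlinarith [norm_nonneg (u n ω), norm_nonneg u₀, sq_nonneg (‖u n ω - u₀‖ - ‖u₀‖)]
  have hG3 : τ n ^ 2 * (M₁ + M₂ * ‖u n ω‖ ^ 2)
      ≤ τ n ^ 2 * (M₁ + M₂ * (2 * ‖u n ω - u₀‖ ^ 2 + 2 * ‖u₀‖ ^ 2)) := by
    nlinarith [mul_nonneg (mul_nonneg (sq_nonneg (τ n)) hM₂.le) (sub_nonneg.mpr hub2)]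
  have hq3 : (0:ℝ) ≤ ‖u n ω - u₀‖ ^ 2 - ‖u n ω - u₀‖ + 1 := by
    nlinarith [sq_nonneg (‖u n ω - u₀‖ - 1)]
  have hprod : (0:ℝ) ≤ 2 * τ n * ‖r n ω‖ * (‖u n ω - u₀‖ ^ 2 - ‖u n ω - u₀‖ + 1) :=
    mul_nonneg (by positivity) hq3
  linarith [hstep2, hq2, hG2, hG3, hprod]
end

section
/- Let H be a real Hilbert space, C ⊆ H a nonempty closed convex set, π_C the metric projection onto C, and j : H → ℝ Fréchet differentiable near C and μ-strongly convex for some μ > 0, with minimizer ū over C. On a probability space with filtration {F_n}, let {u_n} ⊂ C satisfy u_{n+1} = π_C(u_n − τ_n g_n) with unbiased stochastic gradients: E[g_n | F_n] = ∇j(u_n), u_n F_n-measurable, and E[‖g_n‖² | F_n] ≤ M₁ + M₂‖u_n‖² almost surely for constants M₁, M₂ > 0. Set e_n := E[‖u_n − ū‖²]. Then for all n, e_{n+1} ≤ e_n (1 − 2μτ_n + 2τ_n² M₂) + τ_n² (M₁ + 2M₂‖ū‖²). -/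
open MeasureTheory Filter

/-- Squared-distance contraction property of the metric projection onto a convex set. -/
lemma proj_dist_sq_le {H : Type*} [NormedAddCommGroup H] [InnerProductSpace ℝ H]
    (C : Set H) (hC_convex : Convex ℝ C)
    (proj : H → H) (hproj_mem : ∀ x, proj x ∈ C)
    (hproj : ∀ x, ∀ w ∈ C, ‖x - proj x‖ ≤ ‖x - w‖)
    (x w : H) (hw : w ∈ C) : ‖proj x - w‖ ^ 2 ≤ ‖x - w‖ ^ 2 := by
  haveI : Nonempty ↑C := ⟨⟨proj x, hproj_mem x⟩⟩
  have hinf : ‖x - proj x‖ = ⨅ w : C, ‖x - (w : H)‖ :=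
    le_antisymm
      (le_ciInf fun w => hproj x w w.2)
      (ciInf_le (⟨0, by rintro y ⟨w, rfl⟩; exact norm_nonneg _⟩ : BddBelow (Set.range fun w : C => ‖x - (w : H)‖)) ⟨proj x, hproj_mem x⟩)
  have h := (norm_eq_iInf_iff_real_inner_le_zero hC_convex (hproj_mem x)).mp hinf w hw
  have key : (0 : ℝ) ≤ inner ℝ (x - proj x) (proj x - w) := by
    have hrw : (proj x - w) = -(w - proj x) := by abel
    rw [hrw, inner_neg_right]; linarith
  have hid := norm_add_sq_real (x - proj x) (proj x - w)
  rw [sub_add_sub_cancel] at hid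
  nlinarith [sq_nonneg ‖x - proj x‖]

/-- Variational inequality at a minimizer over a convex set. -/
lemma grad_min_nonneg {H : Type*} [NormedAddCommGroup H] [InnerProductSpace ℝ H]
    [CompleteSpace H]
    (C : Set H) (hC_convex : Convex ℝ C)
    (j : H → ℝ) (j' : H → H)
    (hj_diff : ∃ U : Set H, IsOpen U ∧ C ⊆ U ∧ ∀ x ∈ U, HasGradientAt j (j' x) x)
    (ub : H) (hub_mem : ub ∈ C) (hub_min : ∀ v ∈ C, j ub ≤ j v)
    (v : H) (hv : v ∈ C) : (0 : ℝ) ≤ inner ℝ (j' ub) (v - ub) := by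
  obtain ⟨U, hUo, hCU, hdiff⟩ := hj_diff
  have hgrad := (hdiff ub (hCU hub_mem)).hasFDerivAt
  have hmin : IsLocalMinOn j C ub := by
    have hm : IsMinOn j C ub := isMinOn_iff.mpr fun y hy => hub_min y hy
    exact hm.filter_mono inf_le_right
  have hcone : v - ub ∈ posTangentConeAt C ub :=
    sub_mem_posTangentConeAt_of_segment_subset (hC_convex.segment_subset hub_mem hv)
  have h := hmin.hasFDerivWithinAt_nonneg hgrad.hasFDerivWithinAt hcone
  simpa [InnerProductSpace.toDual_apply_apply] using h

set_option maxHeartbeats 1000000 in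
/-- One-step recursion for `e n = E[‖u n - ū‖²]` in the strongly convex case with unbiased
stochastic gradients:
`e (n+1) ≤ e n (1 - 2 μc τ n + 2 τ n² M₂) + τ n² (M₁ + 2 M₂ ‖ū‖²)`. -/
theorem psg_strongly_convex_expected_recursion
    {H : Type*} [NormedAddCommGroup H] [InnerProductSpace ℝ H] [CompleteSpace H]
    {Ω : Type*} {m0 : MeasurableSpace Ω} {μ : Measure Ω} [IsProbabilityMeasure μ]
    (ℱ : Filtration ℕ m0)
    (C : Set H) (hC_ne : C.Nonempty) (hC_closed : IsClosed C) (hC_convex : Convex ℝ C)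
    (proj : H → H) (hproj_mem : ∀ x, proj x ∈ C)
    (hproj : ∀ x, ∀ w ∈ C, ‖x - proj x‖ ≤ ‖x - w‖)
    (j : H → ℝ) (j' : H → H)
    (hj_diff : ∃ U : Set H, IsOpen U ∧ C ⊆ U ∧ ∀ x ∈ U, HasGradientAt j (j' x) x)
    (μc : ℝ) (hμc : 0 < μc)
    (hj_sconvex : ∀ x y : H,
      j x + (inner ℝ (j' x) (y - x) : ℝ) + μc / 2 * ‖y - x‖ ^ 2 ≤ j y)
    (ub : H) (hub_mem : ub ∈ C) (hub_min : ∀ v ∈ C, j ub ≤ j v)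
    (τ : ℕ → ℝ) (hτ_nonneg : ∀ n, 0 ≤ τ n)
    (u g : ℕ → Ω → H)
    (hu_mem : ∀ n ω, u n ω ∈ C)
    (hupdate : ∀ n ω, u (n + 1) ω = proj (u n ω - τ n • g n ω))
    (hu_meas : ∀ n, StronglyMeasurable[ℱ n] (u n))
    -- unbiased stochastic gradients
    (hg_unbiased : ∀ n, μ[g n | ℱ n] =ᵐ[μ] fun ω => j' (u n ω))
    (hg_int : ∀ n, Integrable (g n) μ)
    (hg_sq_int : ∀ n, Integrable (fun ω => ‖g n ω‖ ^ 2) μ)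
    (hu_sq_int : ∀ n u₀, Integrable (fun ω => ‖u n ω - u₀‖ ^ 2) μ)
    (M₁ M₂ : ℝ) (hM₁ : 0 < M₁) (hM₂ : 0 < M₂)
    (hgrowth : ∀ n, ∀ᵐ ω ∂μ,
      (μ[fun ω' => ‖g n ω'‖ ^ 2 | ℱ n]) ω ≤ M₁ + M₂ * ‖u n ω‖ ^ 2)
    (e : ℕ → ℝ) (he : ∀ n, e n = ∫ ω, ‖u n ω - ub‖ ^ 2 ∂μ) :
    ∀ n, e (n + 1) ≤ e n * (1 - 2 * μc * τ n + 2 * τ n ^ 2 * M₂)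
      + τ n ^ 2 * (M₁ + 2 * M₂ * ‖ub‖ ^ 2) := by
  -- strong monotonicity at the minimizer
  have hvi : ∀ x ∈ C, μc * ‖x - ub‖ ^ 2 ≤ (inner ℝ (j' x) (x - ub) : ℝ) := by
    intro x hx
    have h0 := grad_min_nonneg C hC_convex j j' hj_diff ub hub_mem hub_min x hx
    have h1 := hj_sconvex x ub
    have h2 := hj_sconvex ub x
    have hflip : (inner ℝ (j' x) (ub - x) : ℝ) = -(inner ℝ (j' x) (x - ub) : ℝ) := by
      rw [show ub - x = -(x - ub) by abel, inner_neg_right]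
    have hnrm : ‖ub - x‖ = ‖x - ub‖ := norm_sub_rev _ _
    rw [hflip, hnrm] at h1
    linarith
  intro n
  have hm : ℱ n ≤ m0 := ℱ.le n
  set v : Ω → H := fun ω => u n ω - ub with hvdef
  have hvm : StronglyMeasurable[ℱ n] v := (hu_meas n).sub stronglyMeasurable_const
  have hvasm : AEStronglyMeasurable v μ := (hvm.mono hm).aestronglyMeasurable
  have hgasm : AEStronglyMeasurable (g n) μ := (hg_int n).1
  have Iv : Integrable (fun ω => ‖v ω‖ ^ 2) μ := hu_sq_int n ub
  have Ig2 : Integrable (fun ω => ‖g n ω‖ ^ 2) μ := hg_sq_int n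
  have Iu2 : Integrable (fun ω => ‖u n ω‖ ^ 2) μ := by simpa using hu_sq_int n 0
  have hgL2 : MemLp (g n) 2 μ := (memLp_two_iff_integrable_sq_norm hgasm).mpr Ig2
  have hvL2 : MemLp v 2 μ := (memLp_two_iff_integrable_sq_norm hvasm).mpr Iv
  set G : Lp H 2 μ := hgL2.toLp _ with hGdef
  set V : Lp H 2 μ := hvL2.toLp _ with hVdef
  have hGg : (G : Ω → H) =ᵐ[μ] g n := hgL2.coeFn_toLp
  have hVv : (V : Ω → H) =ᵐ[μ] v := hvL2.coeFn_toLp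
  set K : Lp H 2 μ := (condExpL2 H ℝ hm G : Lp H 2 μ) with hKdef
  have hKm : AEStronglyMeasurable[ℱ n] (K : Ω → H) μ := by
    rw [hKdef]; exact lpMeas.aestronglyMeasurable _
  have hKcond : (K : Ω → H) =ᵐ[μ] μ[g n | ℱ n] := by
    refine ae_eq_condExp_of_forall_setIntegral_eq hm (hg_int n)
      (fun s hs hμs => ?_) (fun s hs hμs => ?_) hKm
    · exact integrableOn_Lp_of_measure_ne_top _ fact_one_le_two_ennreal.elim hμs.ne
    · rw [hKdef, integral_condExpL2_eq hm G hs hμs.ne]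
      exact setIntegral_congr_ae (hm s hs) (hGg.mono fun ω h _ => h)
  have hKj : (K : Ω → H) =ᵐ[μ] fun ω => j' (u n ω) := hKcond.trans (hg_unbiased n)
  -- the inner-product identity via self-adjointness of the L² conditional expectation
  have hVm' : AEStronglyMeasurable[ℱ n] (V : Ω → H) μ := ⟨v, hvm, hVv⟩
  have hKV : (inner ℝ K V : ℝ) = inner ℝ G V := by
    rw [hKdef]; exact inner_condExpL2_eq_inner_fun hm G V hVm'
  have hinner : ∫ ω, (inner ℝ (g n ω) (v ω) : ℝ) ∂μ = ∫ ω, (inner ℝ (j' (u n ω)) (v ω) : ℝ) ∂μ := by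
    have h1 : ∫ ω, (inner ℝ (g n ω) (v ω) : ℝ) ∂μ = (inner ℝ G V : ℝ) := by
      rw [L2.inner_def]
      refine integral_congr_ae ?_
      filter_upwards [hGg, hVv] with ω h1 h2
      rw [h1, h2]
    have h2 : (inner ℝ K V : ℝ) = ∫ ω, (inner ℝ (j' (u n ω)) (v ω) : ℝ) ∂μ := by
      rw [L2.inner_def]
      refine integral_congr_ae ?_
      filter_upwards [hKj, hVv] with ω h1 h2
      rw [h1, h2]
    rw [h1, ← hKV, h2]
  -- integrability of the cross terms
  have inner_int : ∀ (f₁ f₂ : Ω → H), AEStronglyMeasurable f₁ μ → AEStronglyMeasurable f₂ μ →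
      Integrable (fun ω => ‖f₁ ω‖ ^ 2) μ → Integrable (fun ω => ‖f₂ ω‖ ^ 2) μ →
      Integrable (fun ω => (inner ℝ (f₁ ω) (f₂ ω) : ℝ)) μ := by
    intro f₁ f₂ h₁ h₂ hi₁ hi₂
    refine Integrable.mono' ((hi₁.add hi₂).div_const 2) (h₁.inner h₂) (ae_of_all _ fun ω => ?_)
    have hc := abs_real_inner_le_norm (f₁ ω) (f₂ ω)
    rw [Real.norm_eq_abs]
    simp only [Pi.add_apply]
    nlinarith [sq_nonneg (‖f₁ ω‖ - ‖f₂ ω‖), norm_nonneg (f₁ ω), norm_nonneg (f₂ ω)]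
  have Icross : Integrable (fun ω => (inner ℝ (g n ω) (v ω) : ℝ)) μ :=
    inner_int _ _ hgasm hvasm Ig2 Iv
  have IK2 : Integrable (fun ω => ‖(K : Ω → H) ω‖ ^ 2) μ :=
    (memLp_two_iff_integrable_sq_norm (Lp.aestronglyMeasurable _)).mp (Lp.memLp _)
  have Ij : Integrable (fun ω => (inner ℝ (j' (u n ω)) (v ω) : ℝ)) μ := by
    refine (inner_int _ _ (Lp.aestronglyMeasurable K) hvasm IK2 Iv).congr ?_
    filter_upwards [hKj] with ω h
    rw [h]
  -- lower bound on the inner product term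
  have hlb : μc * e n ≤ ∫ ω, (inner ℝ (g n ω) (v ω) : ℝ) ∂μ := by
    rw [hinner, he n]
    have := integral_mono (Iv.const_mul μc) Ij fun ω => hvi (u n ω) (hu_mem n ω)
    rwa [integral_const_mul] at this
  -- upper bound on the second moment of the gradient
  have hE : ∫ ω, ‖g n ω‖ ^ 2 ∂μ ≤ M₁ + M₂ * ∫ ω, ‖u n ω‖ ^ 2 ∂μ := by
    have h1 : ∫ ω, ‖g n ω‖ ^ 2 ∂μ = ∫ ω, (μ[fun ω' => ‖g n ω'‖ ^ 2 | ℱ n]) ω ∂μ :=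
      (integral_condExp hm).symm
    have h2 := integral_mono_ae integrable_condExp
      ((integrable_const M₁).add (Iu2.const_mul M₂)) (hgrowth n)
    rw [h1]
    calc ∫ ω, (μ[fun ω' => ‖g n ω'‖ ^ 2 | ℱ n]) ω ∂μ
        ≤ ∫ ω, (M₁ + M₂ * ‖u n ω‖ ^ 2) ∂μ := h2
      _ = M₁ + M₂ * ∫ ω, ‖u n ω‖ ^ 2 ∂μ := by
          rw [integral_add (integrable_const M₁) (Iu2.const_mul M₂), integral_const,
            integral_const_mul]
          simp
  have hu2 : ∫ ω, ‖u n ω‖ ^ 2 ∂μ ≤ 2 * e n + 2 * ‖ub‖ ^ 2 := by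
    have hpt : ∀ ω, ‖u n ω‖ ^ 2 ≤ 2 * ‖v ω‖ ^ 2 + 2 * ‖ub‖ ^ 2 := by
      intro ω
      have h1 : ‖u n ω‖ ≤ ‖v ω‖ + ‖ub‖ := by
        calc ‖u n ω‖ = ‖v ω + ub‖ := by rw [hvdef]; simp
          _ ≤ ‖v ω‖ + ‖ub‖ := norm_add_le _ _
      nlinarith [sq_nonneg (‖v ω‖ - ‖ub‖), norm_nonneg (u n ω), norm_nonneg (v ω),
        norm_nonneg ub]
    have := integral_mono Iu2 ((Iv.const_mul 2).add (integrable_const (2 * ‖ub‖ ^ 2))) hpt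
    calc ∫ ω, ‖u n ω‖ ^ 2 ∂μ ≤ ∫ ω, (2 * ‖v ω‖ ^ 2 + 2 * ‖ub‖ ^ 2) ∂μ := this
      _ = 2 * e n + 2 * ‖ub‖ ^ 2 := by
          rw [integral_add (Iv.const_mul 2) (integrable_const _), integral_const,
            integral_const_mul, he n]
          simp
          rfl
  -- pointwise one-step inequality and expansion
  have hpt : ∀ ω, ‖u (n + 1) ω - ub‖ ^ 2
      ≤ ‖v ω‖ ^ 2 - 2 * τ n * (inner ℝ (g n ω) (v ω) : ℝ) + τ n ^ 2 * ‖g n ω‖ ^ 2 := by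
    intro ω
    have h1 : ‖u (n + 1) ω - ub‖ ^ 2 ≤ ‖(u n ω - τ n • g n ω) - ub‖ ^ 2 := by
      rw [hupdate n ω]
      exact proj_dist_sq_le C hC_convex proj hproj_mem hproj _ ub hub_mem
    have h2 : (u n ω - τ n • g n ω) - ub = v ω - τ n • g n ω := by rw [hvdef]; beta_reduce; abel
    rw [h2] at h1
    have h3 := norm_sub_sq_real (v ω) (τ n • g n ω)
    rw [real_inner_smul_right, norm_smul, Real.norm_eq_abs] at h3
    have h4 : (inner ℝ (v ω) (g n ω) : ℝ) = inner ℝ (g n ω) (v ω) := real_inner_comm _ _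
    calc ‖u (n + 1) ω - ub‖ ^ 2 ≤ ‖v ω - τ n • g n ω‖ ^ 2 := h1
      _ = ‖v ω‖ ^ 2 - 2 * τ n * (inner ℝ (g n ω) (v ω) : ℝ) + τ n ^ 2 * ‖g n ω‖ ^ 2 := by
          rw [h3, h4, mul_pow, sq_abs]; ring
  -- integrate the pointwise inequality
  have key : e (n + 1) ≤ e n - 2 * τ n * (∫ ω, (inner ℝ (g n ω) (v ω) : ℝ) ∂μ)
      + τ n ^ 2 * ∫ ω, ‖g n ω‖ ^ 2 ∂μ := by
    rw [he (n + 1), he n]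
    have I3 : Integrable (fun ω => 2 * τ n * (inner ℝ (g n ω) (v ω) : ℝ)) μ :=
      Icross.const_mul _
    have I1 : Integrable (fun ω =>
        ‖v ω‖ ^ 2 - 2 * τ n * (inner ℝ (g n ω) (v ω) : ℝ)) μ := Iv.sub I3
    have I2 : Integrable (fun ω => τ n ^ 2 * ‖g n ω‖ ^ 2) μ := Ig2.const_mul _
    have hint : Integrable (fun ω =>
        ‖v ω‖ ^ 2 - 2 * τ n * (inner ℝ (g n ω) (v ω) : ℝ) + τ n ^ 2 * ‖g n ω‖ ^ 2) μ :=
      I1.add I2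
    calc ∫ ω, ‖u (n + 1) ω - ub‖ ^ 2 ∂μ
        ≤ ∫ ω, (‖v ω‖ ^ 2 - 2 * τ n * (inner ℝ (g n ω) (v ω) : ℝ)
            + τ n ^ 2 * ‖g n ω‖ ^ 2) ∂μ := integral_mono (hu_sq_int (n + 1) ub) hint hpt
      _ = (∫ ω, ‖v ω‖ ^ 2 ∂μ) - 2 * τ n * (∫ ω, (inner ℝ (g n ω) (v ω) : ℝ) ∂μ)
            + τ n ^ 2 * ∫ ω, ‖g n ω‖ ^ 2 ∂μ := by
          rw [integral_add I1 I2, integral_sub Iv I3, integral_const_mul, integral_const_mul]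
  -- combine all bounds
  have hg2b : ∫ ω, ‖g n ω‖ ^ 2 ∂μ ≤ M₁ + 2 * M₂ * e n + 2 * M₂ * ‖ub‖ ^ 2 := by
    nlinarith [hE, hu2, hM₂]
  have h3 : τ n ^ 2 * (∫ ω, ‖g n ω‖ ^ 2 ∂μ)
      ≤ τ n ^ 2 * (M₁ + 2 * M₂ * e n + 2 * M₂ * ‖ub‖ ^ 2) :=
    mul_le_mul_of_nonneg_left hg2b (sq_nonneg _)
  have h4 : 2 * τ n * (μc * e n) ≤ 2 * τ n * (∫ ω, (inner ℝ (g n ω) (v ω) : ℝ) ∂μ) :=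
    mul_le_mul_of_nonneg_left hlb (by linarith [hτ_nonneg n])
  nlinarith [key, h3, h4]
end

section
/- Let H be a real Hilbert space, C ⊆ H a nonempty closed convex set, π_C the metric projection, and j : H → ℝ convex and Fréchet differentiable near C with a minimizer ū over C. Let {u_n} ⊂ C satisfy u_{n+1} = π_C(u_n − τ_n g_n) with deterministic τ_n > 0 and unbiased stochastic gradients: E[g_n | F_n] = ∇j(u_n), u_n F_n-measurable, E[‖g_n‖² | F_n] ≤ M₁ + M₂‖u_n‖² almost surely. Set e_n := E[‖u_n − ū‖²], and for 1 ≤ i ≤ N define γ_n := τ_n / (Σ_{l=i}^N τ_l) and the averaged iterate ũ_i^N := Σ_{n=i}^N γ_n u_n. Then E[j(ũ_i^N) − j(ū)] ≤ (e_i + Σ_{n=i}^N τ_n² (2M₂ e_n + M₁ + 2M₂‖ū‖²)) / (2 Σ_{n=i}^N τ_n). -/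
open MeasureTheory Filter Set Topology

section Aux

variable {H : Type*} [NormedAddCommGroup H] [InnerProductSpace ℝ H] [CompleteSpace H]

lemma aux_grad_ineq {j : H → ℝ} (hj : ConvexOn ℝ Set.univ j) {G x : H}
    (hG : HasGradientAt j G x) (y : H) : j x + inner ℝ G (y - x) ≤ j y := by
  set φ : ℝ → H := fun t => x + t • (y - x) with hφ
  have hc : HasDerivAt φ (y - x) 0 := by
    exact (((hasDerivAt_id (0:ℝ)).smul_const (y - x)).const_add x).congr_deriv (one_smul ℝ _)
  have hφ0 : φ 0 = x := by simp [hφ]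
  have hD : HasDerivAt (fun t => j (φ t)) (inner ℝ G (y - x) : ℝ) 0 := by
    have hF := hasGradientAt_iff_hasFDerivAt.mp hG
    rw [← hφ0] at hF
    exact hF.comp_hasDerivAt 0 hc
  have hslope : Tendsto (fun t : ℝ => (j (φ t) - j (φ 0)) / t) (𝓝[>] 0)
      (𝓝 (inner ℝ G (y - x) : ℝ)) := by
    have h1 := hasDerivAt_iff_tendsto_slope.mp hD
    have h2 : Tendsto (slope (fun t => j (φ t)) 0) (𝓝[>] 0) (𝓝 (inner ℝ G (y - x) : ℝ)) :=
      h1.mono_left (nhdsWithin_mono _ (fun t ht => ne_of_gt ht))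
    refine h2.congr fun t => ?_
    simp [slope_def_field]
  have hquot : ∀ᶠ t in 𝓝[>] (0:ℝ), (j (φ t) - j (φ 0)) / t ≤ j y - j x := by
    filter_upwards [Ioc_mem_nhdsGT_of_mem (by constructor <;> norm_num : (0:ℝ) ∈ Ico (0:ℝ) 1)]
      with t ht
    have h1 : φ t = (1 - t) • x + t • y := by
      simp only [hφ, smul_sub, sub_smul, one_smul]; abel
    have hcv := hj.2 (Set.mem_univ x) (Set.mem_univ y)
      (by linarith [ht.2] : (0:ℝ) ≤ 1 - t) ht.1.le (by ring)
    rw [h1, hφ0, div_le_iff₀ ht.1]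
    simp only [smul_eq_mul] at hcv
    nlinarith
  have := le_of_tendsto hslope hquot
  linarith

lemma aux_proj_sq {C : Set H} (hC_convex : Convex ℝ C) (proj : H → H)
    (hproj_mem : ∀ x, proj x ∈ C) (hproj : ∀ x, ∀ w ∈ C, ‖x - proj x‖ ≤ ‖x - w‖) :
    ∀ x, ∀ w ∈ C, ‖proj x - w‖ ^ 2 ≤ ‖x - w‖ ^ 2 := by
  have hVI : ∀ x, ∀ w ∈ C, (inner ℝ (x - proj x) (w - proj x) : ℝ) ≤ 0 := by
    intro x w hw
    set p := proj x with hp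
    set a : ℝ := inner ℝ (x - p) (w - p) with ha
    set c : ℝ := ‖w - p‖ ^ 2 with hc
    have key : ∀ t : ℝ, 0 < t → t ≤ 1 → 2 * t * a ≤ t ^ 2 * c := by
      intro t ht0 ht1
      have hmem : p + t • (w - p) ∈ C := by
        have := hC_convex (hproj_mem x) hw (by linarith : (0:ℝ) ≤ 1 - t) ht0.le (by ring)
        have he : (1 - t) • p + t • w = p + t • (w - p) := by
          simp only [smul_sub, sub_smul, one_smul]; abel
        rwa [he] at this
      have h2 := hproj x _ hmem
      have h3 : ‖x - p‖ ^ 2 ≤ ‖x - p - t • (w - p)‖ ^ 2 := by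
        have hrw : x - (p + t • (w - p)) = x - p - t • (w - p) := by abel
        rw [← hrw]
        exact pow_le_pow_left₀ (norm_nonneg _) h2 2
      have h4 : ‖x - p - t • (w - p)‖ ^ 2
          = ‖x - p‖ ^ 2 - 2 * (t * a) + t ^ 2 * c := by
        rw [norm_sub_sq_real, real_inner_smul_right, norm_smul, Real.norm_eq_abs,
          abs_of_pos ht0, mul_pow]
        try ring
      rw [h4] at h3
      linarith
    by_contra hcon
    push_neg at hcon
    have hc0 : 0 < c := by
      rcases eq_or_lt_of_le (by positivity : (0:ℝ) ≤ c) with h | h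
      · exfalso
        have hwp : w - p = 0 := by
          have hn : ‖w - p‖ = 0 := by
            have := h.symm
            rw [hc] at this
            nlinarith [norm_nonneg (w - p)]
          simpa using hn
        rw [ha, hwp, inner_zero_right] at hcon
        exact absurd hcon (lt_irrefl 0)
      · exact h
    set t : ℝ := min 1 (a / c) with htd
    have ht0 : 0 < t := lt_min one_pos (div_pos hcon hc0)
    have ht1 : t ≤ 1 := min_le_left _ _
    have h5 := key t ht0 ht1
    have h6 : t ^ 2 * c ≤ t * a := by
      have hta : t ≤ a / c := min_le_right _ _
      calc t ^ 2 * c = t * (t * c) := by ring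
        _ ≤ t * ((a / c) * c) := by
            apply mul_le_mul_of_nonneg_left _ ht0.le
            exact mul_le_mul_of_nonneg_right hta hc0.le
        _ = t * a := by field_simp
    nlinarith
  intro x w hw
  have h1 : (inner ℝ (x - proj x) (proj x - w) : ℝ) ≥ 0 := by
    have hv := hVI x w hw
    have heq : (inner ℝ (x - proj x) (proj x - w) : ℝ) = - inner ℝ (x - proj x) (w - proj x) := by
      rw [← inner_neg_right]; congr 1; abel
    rw [heq]; linarith
  have h2 : x - w = (x - proj x) + (proj x - w) := by abel
  rw [h2, norm_add_sq_real]
  nlinarith [norm_nonneg (x - proj x), sq_nonneg (‖x - proj x‖)]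

variable {Ω : Type*} {m m0 : MeasurableSpace Ω} {μ : Measure Ω}

lemma aux_condexp_ae_eq_condExpL2 (hm : m ≤ m0) [IsFiniteMeasure μ] {g : Ω → H}
    (hg : MemLp g 2 μ) :
    (condExpL2 H ℝ hm (hg.toLp g) : Ω → H) =ᵐ[μ] μ[g|m] := by
  refine ae_eq_condExp_of_forall_setIntegral_eq hm (hg.integrable one_le_two)
    (fun s _ hμs => integrableOn_condExpL2_of_measure_ne_top hm hμs.ne _)
    (fun s hs hμs => ?_) (aestronglyMeasurable_condExpL2 hm _)
  rw [integral_condExpL2_eq hm (hg.toLp g) hs hμs.ne]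
  exact setIntegral_congr_ae (hm s hs) ((hg.coeFn_toLp).mono fun x hx _ => hx)

lemma aux_memL2_condexp (hm : m ≤ m0) [IsFiniteMeasure μ] {g : Ω → H}
    (hg : MemLp g 2 μ) : MemLp (μ[g|m]) 2 μ :=
  (Lp.memLp (condExpL2 H ℝ hm (hg.toLp g) : Lp H 2 μ)).ae_eq
    (aux_condexp_ae_eq_condExpL2 hm hg)

lemma aux_integrable_inner {g h : Ω → H} (hg : MemLp g 2 μ) (hh : MemLp h 2 μ) :
    Integrable (fun ω => (inner ℝ (g ω) (h ω) : ℝ)) μ := by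
  have h2 := L2.integrable_inner (𝕜 := ℝ) (hg.toLp g) (hh.toLp h)
  refine h2.congr ?_
  filter_upwards [hg.coeFn_toLp, hh.coeFn_toLp] with ω h1 h2
  rw [h1, h2]

lemma aux_integral_inner_condexp (hm : m ≤ m0) [IsFiniteMeasure μ] {g h : Ω → H}
    (hg : MemLp g 2 μ) (hh : MemLp h 2 μ) (hhm : AEStronglyMeasurable[m] h μ) :
    ∫ ω, (inner ℝ (g ω) (h ω) : ℝ) ∂μ = ∫ ω, (inner ℝ ((μ[g|m]) ω) (h ω) : ℝ) ∂μ := by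
  set F := hg.toLp g
  set Hh := hh.toLp h
  have hHm : AEStronglyMeasurable[m] (Hh : Ω → H) μ :=
    hhm.congr (hh.coeFn_toLp).symm
  have key := inner_condExpL2_eq_inner_fun (E := H) (𝕜 := ℝ) hm F Hh hHm
  rw [L2.inner_def, L2.inner_def] at key
  have hL : ∫ ω, (inner ℝ ((condExpL2 H ℝ hm F : Ω → H) ω) (Hh ω) : ℝ) ∂μ
      = ∫ ω, (inner ℝ ((μ[g|m]) ω) (h ω) : ℝ) ∂μ := by
    refine integral_congr_ae ?_
    filter_upwards [aux_condexp_ae_eq_condExpL2 hm hg, hh.coeFn_toLp] with ω h1 h2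
    rw [h1, h2]
  have hR : ∫ ω, (inner ℝ (F ω) (Hh ω) : ℝ) ∂μ = ∫ ω, (inner ℝ (g ω) (h ω) : ℝ) ∂μ := by
    refine integral_congr_ae ?_
    filter_upwards [hg.coeFn_toLp, hh.coeFn_toLp] with ω h1 h2
    rw [h1, h2]
  rw [← hR, ← hL]
  exact key.symm

end Aux

/-- Averaged-iterate efficiency estimate in the general convex case:
`E[j(ũ_i^N) - j ū] ≤ (e_i + ∑_{n=i}^N τ_n² (2 M₂ e_n + M₁ + 2 M₂ ‖ū‖²)) / (2 ∑_{n=i}^N τ_n)`,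
where `ũ_i^N = ∑_{n=i}^N (τ_n / ∑_{l=i}^N τ_l) u_n`. -/
theorem psg_averaged_iterates_estimate
    {H : Type*} [NormedAddCommGroup H] [InnerProductSpace ℝ H] [CompleteSpace H]
    {Ω : Type*} {m0 : MeasurableSpace Ω} {μ : Measure Ω} [IsProbabilityMeasure μ]
    (ℱ : Filtration ℕ m0)
    (C : Set H) (hC_ne : C.Nonempty) (hC_closed : IsClosed C) (hC_convex : Convex ℝ C)
    (proj : H → H) (hproj_mem : ∀ x, proj x ∈ C)
    (hproj : ∀ x, ∀ w ∈ C, ‖x - proj x‖ ≤ ‖x - w‖)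
    (j : H → ℝ) (j' : H → H) (hj_convex : ConvexOn ℝ Set.univ j)
    (hj_diff : ∃ U : Set H, IsOpen U ∧ C ⊆ U ∧ ∀ x ∈ U, HasGradientAt j (j' x) x)
    (ub : H) (hub_mem : ub ∈ C) (hub_min : ∀ v ∈ C, j ub ≤ j v)
    (τ : ℕ → ℝ) (hτ_pos : ∀ n, 0 < τ n)
    (u g : ℕ → Ω → H)
    (hu_mem : ∀ n ω, u n ω ∈ C)
    (hupdate : ∀ n ω, u (n + 1) ω = proj (u n ω - τ n • g n ω))
    (hu_meas : ∀ n, StronglyMeasurable[ℱ n] (u n))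
    (hg_unbiased : ∀ n, μ[g n | ℱ n] =ᵐ[μ] fun ω => j' (u n ω))
    (hg_int : ∀ n, Integrable (g n) μ)
    (hg_sq_int : ∀ n, Integrable (fun ω => ‖g n ω‖ ^ 2) μ)
    (hu_sq_int : ∀ n u₀, Integrable (fun ω => ‖u n ω - u₀‖ ^ 2) μ)
    (M₁ M₂ : ℝ) (hM₁ : 0 < M₁) (hM₂ : 0 < M₂)
    (hgrowth : ∀ n, ∀ᵐ ω ∂μ,
      (μ[fun ω' => ‖g n ω'‖ ^ 2 | ℱ n]) ω ≤ M₁ + M₂ * ‖u n ω‖ ^ 2)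
    (e : ℕ → ℝ) (he : ∀ n, e n = ∫ ω, ‖u n ω - ub‖ ^ 2 ∂μ)
    (hjavg_int : ∀ i N : ℕ, Integrable (fun ω =>
      j (∑ n ∈ Finset.Icc i N, (τ n / ∑ l ∈ Finset.Icc i N, τ l) • u n ω)) μ) :
    ∀ i N : ℕ, 1 ≤ i → i ≤ N →
      (∫ ω, j (∑ n ∈ Finset.Icc i N, (τ n / ∑ l ∈ Finset.Icc i N, τ l) • u n ω) ∂μ) - j ub ≤
        (e i + ∑ n ∈ Finset.Icc i N, τ n ^ 2 * (2 * M₂ * e n + M₁ + 2 * M₂ * ‖ub‖ ^ 2)) /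
          (2 * ∑ n ∈ Finset.Icc i N, τ n) := by
  obtain ⟨U, hUopen, hCU, hgrad⟩ := hj_diff
  -- basic measurability / integrability facts
  have hu_sm : ∀ n, AEStronglyMeasurable (u n) μ :=
    fun n => ((hu_meas n).mono (ℱ.le n)).aestronglyMeasurable
  have h_memL2_u : ∀ n (v : H), MemLp (fun ω => u n ω - v) 2 μ := fun n v =>
    (memLp_two_iff_integrable_sq_norm ((hu_sm n).sub aestronglyMeasurable_const)).mpr
      (hu_sq_int n v)
  have h_memL2_g : ∀ n, MemLp (g n) 2 μ := fun n =>
    (memLp_two_iff_integrable_sq_norm (hg_int n).1).mpr (hg_sq_int n)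
  have hjint : ∀ n, Integrable (fun ω => j (u n ω)) μ := by
    intro n
    have h0 := hjavg_int n n
    simp only [Finset.Icc_self, Finset.sum_singleton, div_self (hτ_pos n).ne', one_smul] at h0
    exact h0
  -- Step 1: one-step descent inequality in expectation
  have step1 : ∀ n, 2 * τ n * ((∫ ω, j (u n ω) ∂μ) - j ub) ≤
      e n - e (n + 1) + τ n ^ 2 * (2 * M₂ * e n + M₁ + 2 * M₂ * ‖ub‖ ^ 2) := by
    intro n
    -- pointwise descent
    have hpt : ∀ ω, ‖u (n+1) ω - ub‖ ^ 2 ≤ ‖u n ω - ub‖ ^ 2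
        - 2 * τ n * inner ℝ (g n ω) (u n ω - ub) + τ n ^ 2 * ‖g n ω‖ ^ 2 := by
      intro ω
      have h1 := aux_proj_sq hC_convex proj hproj_mem hproj (u n ω - τ n • g n ω) ub hub_mem
      rw [hupdate n ω]
      refine le_trans h1 (le_of_eq ?_)
      have hrw : u n ω - τ n • g n ω - ub = (u n ω - ub) - τ n • g n ω := by abel
      rw [hrw, norm_sub_sq_real, real_inner_smul_right, norm_smul, Real.norm_eq_abs,
        abs_of_pos (hτ_pos n), mul_pow, real_inner_comm (u n ω - ub) (g n ω)]
      ring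
    have hInt_inner : Integrable (fun ω => (inner ℝ (g n ω) (u n ω - ub) : ℝ)) μ :=
      aux_integrable_inner (h_memL2_g n) (h_memL2_u n ub)
    -- integrate the pointwise descent
    have hmain : e (n+1) ≤ e n - 2 * τ n * ∫ ω, (inner ℝ (g n ω) (u n ω - ub) : ℝ) ∂μ
        + τ n ^ 2 * ∫ ω, ‖g n ω‖ ^ 2 ∂μ := by
      rw [he (n+1), he n]
      have hR : Integrable (fun ω => ‖u n ω - ub‖ ^ 2
          - 2 * τ n * inner ℝ (g n ω) (u n ω - ub) + τ n ^ 2 * ‖g n ω‖ ^ 2) μ :=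
        ((hu_sq_int n ub).sub (hInt_inner.const_mul _)).add ((hg_sq_int n).const_mul _)
      calc ∫ ω, ‖u (n+1) ω - ub‖ ^ 2 ∂μ
          ≤ ∫ ω, (‖u n ω - ub‖ ^ 2 - 2 * τ n * inner ℝ (g n ω) (u n ω - ub)
              + τ n ^ 2 * ‖g n ω‖ ^ 2) ∂μ :=
            integral_mono (hu_sq_int (n+1) ub) hR (fun ω => hpt ω)
        _ = ∫ ω, ‖u n ω - ub‖ ^ 2 ∂μ
              - 2 * τ n * ∫ ω, (inner ℝ (g n ω) (u n ω - ub) : ℝ) ∂μ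
              + τ n ^ 2 * ∫ ω, ‖g n ω‖ ^ 2 ∂μ := by
            have hA1 : Integrable (fun ω => ‖u n ω - ub‖ ^ 2
                - 2 * τ n * inner ℝ (g n ω) (u n ω - ub)) μ :=
              (hu_sq_int n ub).sub (hInt_inner.const_mul _)
            have hA2 : Integrable (fun ω => τ n ^ 2 * ‖g n ω‖ ^ 2) μ :=
              (hg_sq_int n).const_mul _
            have hA3 : Integrable (fun ω => (2 * τ n) * (inner ℝ (g n ω) (u n ω - ub) : ℝ)) μ :=
              hInt_inner.const_mul _
            rw [integral_add hA1 hA2, integral_sub (hu_sq_int n ub) hA3,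
              integral_const_mul _ _, integral_const_mul _ _]
    -- the inner-product term dominates the objective gap
    have hinner_ineq : (∫ ω, j (u n ω) ∂μ) - j ub
        ≤ ∫ ω, (inner ℝ (g n ω) (u n ω - ub) : ℝ) ∂μ := by
      have hmeas' : AEStronglyMeasurable[ℱ n] (fun ω => u n ω - ub) μ :=
        StronglyMeasurable.aestronglyMeasurable ((hu_meas n).sub stronglyMeasurable_const)
      rw [aux_integral_inner_condexp (ℱ.le n) (h_memL2_g n) (h_memL2_u n ub) hmeas']
      have hcongr : (∫ ω, (inner ℝ ((μ[g n|ℱ n]) ω) (u n ω - ub) : ℝ) ∂μ)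
          = ∫ ω, (inner ℝ (j' (u n ω)) (u n ω - ub) : ℝ) ∂μ :=
        integral_congr_ae ((hg_unbiased n).mono fun ω hω => by dsimp only; rw [hω])
      rw [hcongr]
      have hint2 : Integrable (fun ω => (inner ℝ (j' (u n ω)) (u n ω - ub) : ℝ)) μ := by
        have hi := aux_integrable_inner (aux_memL2_condexp (ℱ.le n) (h_memL2_g n))
          (h_memL2_u n ub)
        exact hi.congr ((hg_unbiased n).mono fun ω hω => by dsimp only; rw [hω])
      have hptg : ∀ ω, j (u n ω) - j ub ≤ (inner ℝ (j' (u n ω)) (u n ω - ub) : ℝ) := by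
        intro ω
        have hx := hgrad (u n ω) (hCU (hu_mem n ω))
        have hgi := aux_grad_ineq hj_convex hx ub
        have hneg : (inner ℝ (j' (u n ω)) (ub - u n ω) : ℝ)
            = - inner ℝ (j' (u n ω)) (u n ω - ub) := by
          rw [← inner_neg_right]; congr 1; abel
        rw [hneg] at hgi; linarith
      have hsub : Integrable (fun ω => j (u n ω) - j ub) μ :=
        (hjint n).sub (integrable_const _)
      have hM := integral_mono hsub hint2 hptg
      rw [integral_sub (hjint n) (integrable_const _), integral_const] at hM
      simpa [measure_univ] using hM
    -- bound the second moment of the stochastic gradient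
    have hint_u0 : Integrable (fun ω => ‖u n ω‖ ^ 2) μ := by
      have h0 := hu_sq_int n 0; simpa using h0
    have hgbound : ∫ ω, ‖g n ω‖ ^ 2 ∂μ ≤ M₁ + 2 * M₂ * e n + 2 * M₂ * ‖ub‖ ^ 2 := by
      have h1 : ∫ ω, ‖g n ω‖ ^ 2 ∂μ
          = ∫ ω, (μ[fun ω' => ‖g n ω'‖ ^ 2|ℱ n]) ω ∂μ := (integral_condExp (ℱ.le n)).symm
      have hi2 : Integrable (fun ω => M₁ + M₂ * ‖u n ω‖ ^ 2) μ :=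
        (integrable_const M₁).add (hint_u0.const_mul M₂)
      have h2 : ∫ ω, (μ[fun ω' => ‖g n ω'‖ ^ 2|ℱ n]) ω ∂μ
          ≤ ∫ ω, (M₁ + M₂ * ‖u n ω‖ ^ 2) ∂μ :=
        integral_mono_ae integrable_condExp hi2 (hgrowth n)
      have hcm : Integrable (fun ω => M₂ * ‖u n ω‖ ^ 2) μ := hint_u0.const_mul M₂
      have h3 : ∫ ω, (M₁ + M₂ * ‖u n ω‖ ^ 2) ∂μ = M₁ + M₂ * ∫ ω, ‖u n ω‖ ^ 2 ∂μ := by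
        rw [integral_add (integrable_const _) hcm, integral_const,
          integral_const_mul _ _]
        simp [measure_univ]
      have h4 : ∫ ω, ‖u n ω‖ ^ 2 ∂μ ≤ 2 * e n + 2 * ‖ub‖ ^ 2 := by
        have hpt4 : ∀ ω, ‖u n ω‖ ^ 2 ≤ 2 * ‖u n ω - ub‖ ^ 2 + 2 * ‖ub‖ ^ 2 := by
          intro ω
          have hle := norm_add_le (u n ω - ub) ub
          have h' : u n ω - ub + ub = u n ω := by abel
          rw [h'] at hle
          have h2 : ‖u n ω‖ ^ 2 ≤ (‖u n ω - ub‖ + ‖ub‖) ^ 2 :=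
            pow_le_pow_left₀ (norm_nonneg _) hle 2
          nlinarith [sq_nonneg (‖u n ω - ub‖ - ‖ub‖)]
        have hi1 : Integrable (fun ω => 2 * ‖u n ω - ub‖ ^ 2) μ := (hu_sq_int n ub).const_mul 2
        have hiS : Integrable (fun ω => 2 * ‖u n ω - ub‖ ^ 2 + 2 * ‖ub‖ ^ 2) μ :=
          hi1.add (integrable_const _)
        have hM := integral_mono hint_u0 hiS hpt4
        rw [integral_add hi1 (integrable_const _),
          integral_const_mul _ _, integral_const] at hM
        rw [he n]
        simpa [measure_univ] using hM
      rw [h1]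
      calc ∫ ω, (μ[fun ω' => ‖g n ω'‖ ^ 2|ℱ n]) ω ∂μ
          ≤ M₁ + M₂ * ∫ ω, ‖u n ω‖ ^ 2 ∂μ := h3 ▸ h2
        _ ≤ M₁ + M₂ * (2 * e n + 2 * ‖ub‖ ^ 2) := by nlinarith [mul_le_mul_of_nonneg_left h4 hM₂.le]
        _ = M₁ + 2 * M₂ * e n + 2 * M₂ * ‖ub‖ ^ 2 := by ring
    have hA := mul_le_mul_of_nonneg_left hinner_ineq (by linarith [hτ_pos n] : (0:ℝ) ≤ 2 * τ n)
    have hB := mul_le_mul_of_nonneg_left hgbound (sq_nonneg (τ n))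
    nlinarith
  intro i N hi hiN
  -- sum the one-step inequalities
  have hS : 0 < ∑ l ∈ Finset.Icc i N, τ l :=
    Finset.sum_pos (fun l _ => hτ_pos l) (Finset.nonempty_Icc.mpr hiN)
  have htel : ∀ M, i ≤ M → ∑ n ∈ Finset.Icc i M, (e n - e (n+1)) = e i - e (M+1) := by
    intro M hM
    induction M, hM using Nat.le_induction with
    | base => simp [Finset.Icc_self]
    | succ M hM ih =>
      rw [Finset.sum_Icc_succ_top (by omega : i ≤ M + 1), ih]
      ring
  have heN1 : 0 ≤ e (N + 1) := by
    rw [he (N+1)]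
    exact integral_nonneg fun ω => by positivity
  have hsum : 2 * ∑ n ∈ Finset.Icc i N, τ n * ((∫ ω, j (u n ω) ∂μ) - j ub)
      ≤ e i + ∑ n ∈ Finset.Icc i N, τ n ^ 2 * (2 * M₂ * e n + M₁ + 2 * M₂ * ‖ub‖ ^ 2) := by
    have h1 : ∑ n ∈ Finset.Icc i N, 2 * τ n * ((∫ ω, j (u n ω) ∂μ) - j ub)
        ≤ ∑ n ∈ Finset.Icc i N, (e n - e (n+1)
            + τ n ^ 2 * (2 * M₂ * e n + M₁ + 2 * M₂ * ‖ub‖ ^ 2)) :=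
      Finset.sum_le_sum fun n _ => step1 n
    rw [Finset.sum_add_distrib, htel N hiN] at h1
    rw [Finset.mul_sum]
    calc ∑ n ∈ Finset.Icc i N, 2 * (τ n * ((∫ ω, j (u n ω) ∂μ) - j ub))
        = ∑ n ∈ Finset.Icc i N, 2 * τ n * ((∫ ω, j (u n ω) ∂μ) - j ub) := by
          refine Finset.sum_congr rfl fun n _ => by ring
      _ ≤ e i - e (N+1) + ∑ n ∈ Finset.Icc i N,
            τ n ^ 2 * (2 * M₂ * e n + M₁ + 2 * M₂ * ‖ub‖ ^ 2) := h1
      _ ≤ e i + ∑ n ∈ Finset.Icc i N,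
            τ n ^ 2 * (2 * M₂ * e n + M₁ + 2 * M₂ * ‖ub‖ ^ 2) := by linarith
  -- Jensen's inequality for the averaged iterate
  set S := ∑ l ∈ Finset.Icc i N, τ l with hSdef
  have hγsum : ∑ n ∈ Finset.Icc i N, τ n / S = 1 := by
    rw [← Finset.sum_div, ← hSdef]
    exact div_self hS.ne'
  have hjensen : ∀ ω, j (∑ n ∈ Finset.Icc i N, (τ n / S) • u n ω)
      ≤ ∑ n ∈ Finset.Icc i N, (τ n / S) * j (u n ω) := by
    intro ω
    have hj2 := hj_convex.map_sum_le (fun n _ => div_nonneg (hτ_pos n).le hS.le) hγsum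
      (fun n _ => Set.mem_univ (u n ω))
    simpa [smul_eq_mul] using hj2
  have hIntSum : Integrable (fun ω => ∑ n ∈ Finset.Icc i N, (τ n / S) * j (u n ω)) μ :=
    integrable_finset_sum _ fun n _ => (hjint n).const_mul _
  have hIjensen : (∫ ω, j (∑ n ∈ Finset.Icc i N, (τ n / S) • u n ω) ∂μ)
      ≤ ∑ n ∈ Finset.Icc i N, (τ n / S) * ∫ ω, j (u n ω) ∂μ := by
    have hM := integral_mono (hjavg_int i N) hIntSum hjensen
    rw [integral_finset_sum _ (fun n _ => (hjint n).const_mul _)] at hM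
    simp_rw [integral_const_mul] at hM
    exact hM
  have hfinal1 : (∫ ω, j (∑ n ∈ Finset.Icc i N, (τ n / S) • u n ω) ∂μ) - j ub
      ≤ ∑ n ∈ Finset.Icc i N, (τ n / S) * ((∫ ω, j (u n ω) ∂μ) - j ub) := by
    have hexp : ∑ n ∈ Finset.Icc i N, (τ n / S) * ((∫ ω, j (u n ω) ∂μ) - j ub)
        = (∑ n ∈ Finset.Icc i N, (τ n / S) * ∫ ω, j (u n ω) ∂μ) - j ub := by
      simp only [mul_sub]
      rw [Finset.sum_sub_distrib, ← Finset.sum_mul, hγsum, one_mul]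
    rw [hexp]
    linarith [hIjensen]
  have hγτ : ∑ n ∈ Finset.Icc i N, (τ n / S) * ((∫ ω, j (u n ω) ∂μ) - j ub)
      = (∑ n ∈ Finset.Icc i N, τ n * ((∫ ω, j (u n ω) ∂μ) - j ub)) / S := by
    rw [Finset.sum_div]
    exact Finset.sum_congr rfl fun n _ => by ring
  have hlast : (∑ n ∈ Finset.Icc i N, τ n * ((∫ ω, j (u n ω) ∂μ) - j ub)) / S
      ≤ (e i + ∑ n ∈ Finset.Icc i N, τ n ^ 2 * (2 * M₂ * e n + M₁ + 2 * M₂ * ‖ub‖ ^ 2))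
        / (2 * S) := by
    rw [div_le_div_iff₀ hS (by positivity)]
    nlinarith [hsum, hS.le]
  rw [hγτ] at hfinal1
  linarith
end

section
/- Let H be a real Hilbert space, C ⊆ H a nonempty, bounded, closed convex set, π_C the metric projection, and j : H → ℝ convex and Fréchet differentiable near C with a minimizer ū over C. Let {u_n} ⊂ C satisfy u_{n+1} = π_C(u_n − τ_n g_n) with unbiased stochastic gradients (E[g_n | F_n] = ∇j(u_n), u_n F_n-measurable) that are uniformly bounded: E[‖g_n‖² | F_n] ≤ M almost surely for some M > 0. Let D_C := sup_{u∈C} ‖u − u₁‖ and fix the number of iterations N; use the constant step size τ_n = D_C/√(MN) for n = 1, …, N, and define the averaged iterate ũ_1^N := (1/N) Σ_{n=1}^N u_n. Then E[j(ũ_1^N) − j(ū)] ≤ D_C √M / √N. -/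
open MeasureTheory Filter

local notation "⟪" x ", " y "⟫" => @inner ℝ _ _ x y

lemma psg_integrable_inner_simpleFunc {Ω : Type*} {m m0 : MeasurableSpace Ω} {μ : Measure Ω}
    (hm : m ≤ m0)
    {H : Type*} [NormedAddCommGroup H] [InnerProductSpace ℝ H]
    {h : Ω → H} (hh : Integrable h μ) (t : @SimpleFunc Ω m H) :
    Integrable (fun ω => ⟪t ω, h ω⟫) μ := by
  obtain ⟨Cb, hCb⟩ := @SimpleFunc.exists_forall_norm_le Ω H m _ t
  refine Integrable.mono' (hh.norm.const_mul Cb)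
    (((t.stronglyMeasurable.mono hm).aestronglyMeasurable).inner hh.1)
    (Filter.Eventually.of_forall fun ω => ?_)
  rw [Real.norm_eq_abs]
  exact (abs_real_inner_le_norm _ _).trans
    (mul_le_mul_of_nonneg_right (hCb ω) (norm_nonneg _))

lemma psg_integral_inner_condexp_simpleFunc {Ω : Type*} {m m0 : MeasurableSpace Ω} {μ : Measure Ω}
    [IsFiniteMeasure μ] (hm : m ≤ m0)
    {H : Type*} [NormedAddCommGroup H] [InnerProductSpace ℝ H] [CompleteSpace H]
    {f : Ω → H} (hf : Integrable f μ) (s : @SimpleFunc Ω m H) :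
    ∫ ω, ⟪s ω, (μ[f|m]) ω⟫ ∂μ = ∫ ω, ⟪s ω, f ω⟫ ∂μ := by
  refine @SimpleFunc.induction Ω H m _
    (fun s => ∫ ω, ⟪s ω, (μ[f|m]) ω⟫ ∂μ = ∫ ω, ⟪s ω, f ω⟫ ∂μ) ?_ ?_ s
  · intro c A hA
    classical
    have key : ∀ (h : Ω → H), Integrable h μ →
        (∫ ω, ⟪Set.indicator A (Function.const Ω c) ω, h ω⟫ ∂μ) = ⟪c, ∫ ω in A, h ω ∂μ⟫ := by
      intro h hh
      have heq : (fun ω => ⟪Set.indicator A (Function.const Ω c) ω, h ω⟫)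
          = Set.indicator A (fun ω => ⟪c, h ω⟫) := by
        funext ω; by_cases hω : ω ∈ A <;> simp [Set.indicator_apply, hω]
      rw [heq, integral_indicator (hm A hA), integral_inner hh.integrableOn c]
    simp only [SimpleFunc.coe_piecewise, SimpleFunc.coe_const, SimpleFunc.coe_zero,
      Function.const_zero, Set.piecewise_eq_indicator]
    rw [key _ integrable_condExp, key _ hf, setIntegral_condExp hm hf hA]
  · intro s₁ s₂ hdisj hfI hgI
    have e1 : ∀ (h : Ω → H), Integrable h μ →
        ∫ ω, ⟪(s₁ + s₂) ω, h ω⟫ ∂μ = (∫ ω, ⟪s₁ ω, h ω⟫ ∂μ) + ∫ ω, ⟪s₂ ω, h ω⟫ ∂μ := by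
      intro h hh
      rw [← integral_add (psg_integrable_inner_simpleFunc hm hh s₁)
        (psg_integrable_inner_simpleFunc hm hh s₂)]
      congr 1; funext ω
      simp [inner_add_left]
    rw [e1 _ integrable_condExp, e1 _ hf, hfI, hgI]

lemma psg_integral_inner_condexp {Ω : Type*} {m m0 : MeasurableSpace Ω} {μ : Measure Ω}
    [IsFiniteMeasure μ] (hm : m ≤ m0)
    {H : Type*} [NormedAddCommGroup H] [InnerProductSpace ℝ H] [CompleteSpace H]
    {f : Ω → H} (hf : Integrable f μ) {v : Ω → H} (hv : StronglyMeasurable[m] v)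
    {K : ℝ} (hK : 0 ≤ K) (hvK : ∀ ω, ‖v ω‖ ≤ K) :
    ∫ ω, ⟪v ω, (μ[f|m]) ω⟫ ∂μ = ∫ ω, ⟪v ω, f ω⟫ ∂μ := by
  have hmeas : ∀ (h : Ω → H), Integrable h μ → ∀ k : ℕ,
      AEStronglyMeasurable (fun ω => ⟪(hv.approxBounded K k) ω, h ω⟫) μ := fun h hh k =>
    (((hv.approxBounded K k).stronglyMeasurable.mono hm).aestronglyMeasurable).inner hh.1
  have hbd : ∀ (h : Ω → H) (k : ℕ), ∀ᵐ ω ∂μ,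
      ‖⟪(hv.approxBounded K k) ω, h ω⟫‖ ≤ K * ‖h ω‖ := by
    intro h k
    refine Filter.Eventually.of_forall fun ω => ?_
    rw [Real.norm_eq_abs]
    exact (abs_real_inner_le_norm _ _).trans
      (mul_le_mul_of_nonneg_right (hv.norm_approxBounded_le hK k ω) (norm_nonneg _))
  have hlim : ∀ (h : Ω → H), ∀ᵐ ω ∂μ, Filter.Tendsto
      (fun k => ⟪(hv.approxBounded K k) ω, h ω⟫) atTop (nhds ⟪v ω, h ω⟫) := by
    intro h
    refine Filter.Eventually.of_forall fun ω => ?_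
    exact (hv.tendsto_approxBounded_of_norm_le (hvK ω)).inner tendsto_const_nhds
  have h1 : Filter.Tendsto (fun k => ∫ ω, ⟪(hv.approxBounded K k) ω, (μ[f|m]) ω⟫ ∂μ)
      atTop (nhds (∫ ω, ⟪v ω, (μ[f|m]) ω⟫ ∂μ)) :=
    tendsto_integral_of_dominated_convergence _ (hmeas _ integrable_condExp)
      (integrable_condExp.norm.const_mul K) (hbd _) (hlim _)
  have h2 : Filter.Tendsto (fun k => ∫ ω, ⟪(hv.approxBounded K k) ω, f ω⟫ ∂μ)
      atTop (nhds (∫ ω, ⟪v ω, f ω⟫ ∂μ)) :=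
    tendsto_integral_of_dominated_convergence _ (hmeas _ hf)
      (hf.norm.const_mul K) (hbd _) (hlim _)
  have heq : ∀ k, ∫ ω, ⟪(hv.approxBounded K k) ω, (μ[f|m]) ω⟫ ∂μ
      = ∫ ω, ⟪(hv.approxBounded K k) ω, f ω⟫ ∂μ := fun k =>
    psg_integral_inner_condexp_simpleFunc hm hf _
  exact tendsto_nhds_unique h1 ((Filter.tendsto_congr heq).2 h2)

lemma psg_subgrad_ineq {H : Type*} [NormedAddCommGroup H] [InnerProductSpace ℝ H]
    [CompleteSpace H]
    {j : H → ℝ} (hj : ConvexOn ℝ Set.univ j) {x gx : H} (hx : HasGradientAt j gx x) (y : H) :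
    j x - j y ≤ ⟪gx, x - y⟫ := by
  have hL : HasDerivAt (fun t : ℝ => j (t • (y - x) + x)) ⟪gx, y - x⟫ 0 := by
    have h1 : HasDerivAt (fun t : ℝ => t • (y - x) + x) (y - x) 0 := by
      simpa using ((hasDerivAt_id (0 : ℝ)).smul_const (y - x)).add_const x
    have h2 : HasFDerivAt j (InnerProductSpace.toDual ℝ H gx) ((0 : ℝ) • (y - x) + x) := by
      simpa using (hasGradientAt_iff_hasFDerivAt.1 hx)
    simpa [Function.comp_def] using h2.comp_hasDerivAt 0 h1
  have hφ : ConvexOn ℝ Set.univ (fun t : ℝ => j (t • (y - x) + x)) := by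
    have := hj.comp_affineMap (AffineMap.lineMap x y : ℝ →ᵃ[ℝ] H)
    simpa [Function.comp_def, AffineMap.lineMap_apply_module'] using this
  have hs := hφ.le_slope_of_hasDerivAt (Set.mem_univ (0 : ℝ)) (Set.mem_univ (1 : ℝ))
    one_pos hL
  have hslope : slope (fun t : ℝ => j (t • (y - x) + x)) 0 1 = j y - j x := by
    simp [slope_def_field]
  rw [hslope] at hs
  have : ⟪gx, x - y⟫ = -⟪gx, y - x⟫ := by rw [← inner_neg_right, neg_sub]
  linarith [hs, this.ge]

lemma psg_proj_sq_le {H : Type*} [NormedAddCommGroup H] [InnerProductSpace ℝ H]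
    [CompleteSpace H]
    {C : Set H} (hC_convex : Convex ℝ C)
    {proj : H → H} (hproj_mem : ∀ x, proj x ∈ C)
    (hproj : ∀ x, ∀ w ∈ C, ‖x - proj x‖ ≤ ‖x - w‖)
    (x : H) {w : H} (hw : w ∈ C) : ‖proj x - w‖ ^ 2 ≤ ‖x - w‖ ^ 2 := by
  haveI : Nonempty C := ⟨⟨proj x, hproj_mem x⟩⟩
  have heq : ‖x - proj x‖ = ⨅ w : C, ‖x - w‖ :=
    le_antisymm (le_ciInf fun w => hproj x w w.2)
      (ciInf_le (⟨0, by rintro y ⟨w, rfl⟩; exact norm_nonneg _⟩ : BddBelow (Set.range fun w : C => ‖x - w‖)) ⟨proj x, hproj_mem x⟩)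
  have hVI := (norm_eq_iInf_iff_real_inner_le_zero hC_convex (hproj_mem x)).1 heq w hw
  have hexp := norm_add_sq_real (x - proj x) (proj x - w)
  rw [sub_add_sub_cancel] at hexp
  have hneg : ⟪x - proj x, proj x - w⟫ = -⟪x - proj x, w - proj x⟫ := by
    rw [← inner_neg_right, neg_sub]
  nlinarith [sq_nonneg ‖x - proj x‖]

/-- Efficiency estimate with constant step sizes on a bounded constraint set:
with `τ n = D_C / √(M N)` for `n = 1, …, N` and `ũ_1^N = (1/N) ∑_{n=1}^N u n`,
`E[j(ũ_1^N) - j ū] ≤ D_C √M / √N`. -/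
theorem psg_constant_stepsize_estimate
    {H : Type*} [NormedAddCommGroup H] [InnerProductSpace ℝ H] [CompleteSpace H]
    {Ω : Type*} {m0 : MeasurableSpace Ω} {μ : Measure Ω} [IsProbabilityMeasure μ]
    (ℱ : Filtration ℕ m0)
    (C : Set H) (hC_ne : C.Nonempty) (hC_closed : IsClosed C) (hC_convex : Convex ℝ C)
    (hC_bdd : Bornology.IsBounded C)
    (proj : H → H) (hproj_mem : ∀ x, proj x ∈ C)
    (hproj : ∀ x, ∀ w ∈ C, ‖x - proj x‖ ≤ ‖x - w‖)
    (j : H → ℝ) (j' : H → H) (hj_convex : ConvexOn ℝ Set.univ j)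
    (hj_diff : ∃ U : Set H, IsOpen U ∧ C ⊆ U ∧ ∀ x ∈ U, HasGradientAt j (j' x) x)
    (ub : H) (hub_mem : ub ∈ C) (hub_min : ∀ v ∈ C, j ub ≤ j v)
    -- deterministic initialization `u₁` and the diameter-type constant `D_C`
    (u₁ : H) (hu₁ : u₁ ∈ C)
    (DC : ℝ) (hDC : IsLUB ((fun v => ‖v - u₁‖) '' C) DC) (hDC_pos : 0 < DC)
    -- the fixed number of iterations and constant step sizes
    (N : ℕ) (hN : 1 ≤ N) (M : ℝ) (hM : 0 < M)
    (τ : ℕ → ℝ) (hτ : ∀ n : ℕ, 1 ≤ n → n ≤ N → τ n = DC / Real.sqrt (M * N))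
    (u g : ℕ → Ω → H)
    (hu_init : ∀ ω, u 1 ω = u₁)
    (hu_mem : ∀ n ω, u n ω ∈ C)
    (hupdate : ∀ n : ℕ, 1 ≤ n → n ≤ N → ∀ ω, u (n + 1) ω = proj (u n ω - τ n • g n ω))
    (hu_meas : ∀ n, StronglyMeasurable[ℱ n] (u n))
    (hg_unbiased : ∀ n, μ[g n | ℱ n] =ᵐ[μ] fun ω => j' (u n ω))
    (hg_int : ∀ n, Integrable (g n) μ)
    (hg_sq_int : ∀ n, Integrable (fun ω => ‖g n ω‖ ^ 2) μ)
    -- uniformly bounded second moments of the stochastic gradients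
    (hgbound : ∀ n, ∀ᵐ ω ∂μ, (μ[fun ω' => ‖g n ω'‖ ^ 2 | ℱ n]) ω ≤ M)
    (hjavg_int : Integrable (fun ω =>
      j ((N : ℝ)⁻¹ • ∑ n ∈ Finset.Icc 1 N, u n ω)) μ) :
    (∫ ω, j ((N : ℝ)⁻¹ • ∑ n ∈ Finset.Icc 1 N, u n ω) ∂μ) - j ub ≤
      DC * Real.sqrt M / Real.sqrt N := by
  -- basic constants and bounds
  have hNR : (0 : ℝ) < (N : ℝ) := by exact_mod_cast hN
  have hDCub : ∀ w ∈ C, ‖w - u₁‖ ≤ DC := fun w hw => hDC.1 ⟨w, hw, rfl⟩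
  set B : ℝ := 2 * DC with hB
  have hB0 : (0 : ℝ) ≤ B := by positivity
  have hub_norm : ∀ n ω, ‖u n ω - ub‖ ≤ B := by
    intro n ω
    calc ‖u n ω - ub‖ = dist (u n ω) ub := (dist_eq_norm _ _).symm
      _ ≤ dist (u n ω) u₁ + dist u₁ ub := dist_triangle _ _ _
      _ ≤ DC + DC := by
          refine add_le_add ?_ ?_
          · rw [dist_eq_norm]; exact hDCub _ (hu_mem n ω)
          · rw [dist_comm, dist_eq_norm]; exact hDCub _ hub_mem
      _ = B := by rw [hB]; ring
  -- measurability and integrability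
  have hu_m0 : ∀ n, StronglyMeasurable (u n) := fun n => (hu_meas n).mono (ℱ.le n)
  have hv_meas : ∀ n, StronglyMeasurable[ℱ n] (fun ω => u n ω - ub) := fun n =>
    (hu_meas n).sub stronglyMeasurable_const
  have hsq_int : ∀ n, Integrable (fun ω => ‖u n ω - ub‖ ^ 2) μ := by
    intro n
    have hm : StronglyMeasurable (fun ω => ‖u n ω - ub‖) :=
      ((hu_m0 n).sub stronglyMeasurable_const).norm
    refine Integrable.mono' (integrable_const (B ^ 2)) ?_
      (Filter.Eventually.of_forall fun ω => ?_)
    · simpa [pow_two, Pi.mul_def] using (hm.mul hm).aestronglyMeasurable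
    · rw [Real.norm_eq_abs, abs_of_nonneg (by positivity)]
      exact pow_le_pow_left₀ (norm_nonneg _) (hub_norm n ω) 2
  have hInn_int : ∀ n, Integrable (fun ω => ⟪u n ω - ub, g n ω⟫) μ := by
    intro n
    refine Integrable.mono' ((hg_int n).norm.const_mul B)
      (((hv_meas n).mono (ℱ.le n)).aestronglyMeasurable.inner (hg_int n).1)
      (Filter.Eventually.of_forall fun ω => ?_)
    rw [Real.norm_eq_abs]
    exact (abs_real_inner_le_norm _ _).trans
      (mul_le_mul_of_nonneg_right (hub_norm n ω) (norm_nonneg _))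
  have hInnC_int : ∀ n, Integrable (fun ω => ⟪u n ω - ub, (μ[g n|ℱ n]) ω⟫) μ := by
    intro n
    refine Integrable.mono'
      ((integrable_condExp (μ := μ) (m := ℱ n) (f := g n)).norm.const_mul B)
      (((hv_meas n).mono (ℱ.le n)).aestronglyMeasurable.inner
        (integrable_condExp (μ := μ) (m := ℱ n) (f := g n)).1)
      (Filter.Eventually.of_forall fun ω => ?_)
    rw [Real.norm_eq_abs]
    exact (abs_real_inner_le_norm _ _).trans
      (mul_le_mul_of_nonneg_right (hub_norm n ω) (norm_nonneg _))
  -- abbreviations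
  set τ₀ : ℝ := DC / Real.sqrt (M * N) with hτ₀def
  have hMN : (0 : ℝ) < M * N := by positivity
  have hsMN : (0 : ℝ) < Real.sqrt (M * N) := Real.sqrt_pos.2 hMN
  have hτ₀ : 0 < τ₀ := div_pos hDC_pos hsMN
  set e : ℕ → ℝ := fun n => ∫ ω, ‖u n ω - ub‖ ^ 2 ∂μ with he
  set I : ℕ → ℝ := fun n => ∫ ω, ⟪u n ω - ub, (μ[g n|ℱ n]) ω⟫ ∂μ with hI
  -- second moment bound in expectation
  have hgM : ∀ n, ∫ ω, ‖g n ω‖ ^ 2 ∂μ ≤ M := by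
    intro n
    have h1 : ∫ ω, ‖g n ω‖ ^ 2 ∂μ
        = ∫ ω, (μ[fun ω' => ‖g n ω'‖ ^ 2|ℱ n]) ω ∂μ :=
      (integral_condExp (f := fun ω' => ‖g n ω'‖ ^ 2) (ℱ.le n)).symm
    rw [h1]
    calc ∫ ω, (μ[fun ω' => ‖g n ω'‖ ^ 2|ℱ n]) ω ∂μ ≤ ∫ _ω, M ∂μ :=
          integral_mono_ae integrable_condExp (integrable_const M) (hgbound n)
      _ = M := by simp
  -- the one-step estimate, integrated
  have hstep : ∀ n, 1 ≤ n → n ≤ N →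
      2 * τ₀ * I n ≤ e n - e (n + 1) + τ₀ ^ 2 * M := by
    intro n h1n hnN
    have hτn : τ n = τ₀ := hτ n h1n hnN
    have hpt : ∀ ω, 2 * τ₀ * ⟪u n ω - ub, g n ω⟫
        ≤ ‖u n ω - ub‖ ^ 2 - ‖u (n + 1) ω - ub‖ ^ 2 + τ₀ ^ 2 * ‖g n ω‖ ^ 2 := by
      intro ω
      have h1 : ‖u (n + 1) ω - ub‖ ^ 2 ≤ ‖(u n ω - τ n • g n ω) - ub‖ ^ 2 := by
        rw [hupdate n h1n hnN ω]
        exact psg_proj_sq_le hC_convex hproj_mem hproj _ hub_mem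
      have h2 : ‖(u n ω - τ n • g n ω) - ub‖ ^ 2
          = ‖u n ω - ub‖ ^ 2 - 2 * τ₀ * ⟪u n ω - ub, g n ω⟫ + τ₀ ^ 2 * ‖g n ω‖ ^ 2 := by
        have e1 : (u n ω - τ n • g n ω) - ub = (u n ω - ub) - τ₀ • (g n ω) := by
          rw [hτn]; abel
        rw [e1, norm_sub_sq_real, real_inner_smul_right, norm_smul]
        simp only [Real.norm_eq_abs, mul_pow, sq_abs]
        ring
      linarith
    have hLint : Integrable (fun ω => 2 * τ₀ * ⟪u n ω - ub, g n ω⟫) μ :=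
      (hInn_int n).const_mul _
    have hRint : Integrable (fun ω =>
        ‖u n ω - ub‖ ^ 2 - ‖u (n + 1) ω - ub‖ ^ 2 + τ₀ ^ 2 * ‖g n ω‖ ^ 2) μ :=
      ((hsq_int n).sub (hsq_int (n + 1))).add ((hg_sq_int n).const_mul (τ₀ ^ 2))
    have hint := integral_mono hLint hRint (fun ω => hpt ω)
    have hsubi : Integrable (fun ω => ‖u n ω - ub‖ ^ 2 - ‖u (n + 1) ω - ub‖ ^ 2) μ :=
      (hsq_int n).sub (hsq_int (n + 1))
    have hcmi : Integrable (fun ω => τ₀ ^ 2 * ‖g n ω‖ ^ 2) μ :=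
      (hg_sq_int n).const_mul (τ₀ ^ 2)
    rw [integral_const_mul, integral_add hsubi hcmi,
      integral_sub (hsq_int n) (hsq_int (n + 1)), integral_const_mul] at hint
    have hswap : I n = ∫ ω, ⟪u n ω - ub, g n ω⟫ ∂μ :=
      psg_integral_inner_condexp (ℱ.le n) (hg_int n) (hv_meas n) hB0 (hub_norm n)
    have hg2 : τ₀ ^ 2 * ∫ ω, ‖g n ω‖ ^ 2 ∂μ ≤ τ₀ ^ 2 * M :=
      mul_le_mul_of_nonneg_left (hgM n) (by positivity)
    show 2 * τ₀ * I n ≤ (∫ ω, ‖u n ω - ub‖ ^ 2 ∂μ) - (∫ ω, ‖u (n + 1) ω - ub‖ ^ 2 ∂μ)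
      + τ₀ ^ 2 * M
    rw [hswap]
    linarith
  -- telescoping sum
  have htel : ∑ n ∈ Finset.Icc 1 N, (e n - e (n + 1)) = e 1 - e (N + 1) := by
    rw [← Finset.Ico_add_one_right_eq_Icc, Finset.sum_Ico_eq_sum_range]
    calc ∑ i ∈ Finset.range (N + 1 - 1), (e (1 + i) - e (1 + i + 1))
        = ∑ i ∈ Finset.range N, ((fun i => e (1 + i)) i - (fun i => e (1 + i)) (i + 1)) := by
          apply Finset.sum_congr (by norm_num); intro i _; simp [Nat.add_assoc]
      _ = (fun i => e (1 + i)) 0 - (fun i => e (1 + i)) N := Finset.sum_range_sub' _ N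
      _ = e 1 - e (N + 1) := by simp [Nat.add_comm]
  have hsum : 2 * τ₀ * ∑ n ∈ Finset.Icc 1 N, I n
      ≤ e 1 - e (N + 1) + N * (τ₀ ^ 2 * M) := by
    have h1 : ∑ n ∈ Finset.Icc 1 N, (2 * τ₀ * I n)
        ≤ ∑ n ∈ Finset.Icc 1 N, (e n - e (n + 1) + τ₀ ^ 2 * M) := by
      refine Finset.sum_le_sum fun n hn => ?_
      obtain ⟨h1n, hnN⟩ := Finset.mem_Icc.1 hn
      exact hstep n h1n hnN
    rw [Finset.sum_add_distrib, htel, Finset.sum_const, Nat.card_Icc,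
      Nat.add_sub_cancel, nsmul_eq_mul] at h1
    rw [Finset.mul_sum]
    exact h1
  have he1 : e 1 ≤ DC ^ 2 := by
    have : e 1 = ∫ _ω, ‖u₁ - ub‖ ^ 2 ∂μ := by
      simp only [he]; congr 1; funext ω; rw [hu_init ω]
    rw [this, integral_const]
    simp only [measure_univ, ENNReal.toReal_one, probReal_univ, smul_eq_mul, one_mul]
    have h1 : ‖u₁ - ub‖ ≤ DC := by
      rw [norm_sub_rev]; exact hDCub ub hub_mem
    nlinarith [norm_nonneg (u₁ - ub)]
  have heN : 0 ≤ e (N + 1) := integral_nonneg fun ω => sq_nonneg _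
  have hsumI : ∑ n ∈ Finset.Icc 1 N, I n ≤ (DC ^ 2 + N * (τ₀ ^ 2 * M)) / (2 * τ₀) := by
    rw [le_div_iff₀ (by positivity), mul_comm]
    calc 2 * τ₀ * ∑ n ∈ Finset.Icc 1 N, I n ≤ e 1 - e (N + 1) + N * (τ₀ ^ 2 * M) := hsum
      _ ≤ DC ^ 2 + N * (τ₀ ^ 2 * M) := by linarith
  -- Jensen + subgradient, a.e.
  obtain ⟨U, hU_open, hCU, hU_grad⟩ := hj_diff
  have hae : ∀ᵐ ω ∂μ, ∀ n : ℕ, (μ[g n|ℱ n]) ω = j' (u n ω) :=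
    MeasureTheory.ae_all_iff.2 fun n => hg_unbiased n
  have havg : ∀ᵐ ω ∂μ, j ((N : ℝ)⁻¹ • ∑ n ∈ Finset.Icc 1 N, u n ω)
      ≤ j ub + (N : ℝ)⁻¹ * ∑ n ∈ Finset.Icc 1 N, ⟪u n ω - ub, (μ[g n|ℱ n]) ω⟫ := by
    filter_upwards [hae] with ω hω
    have hJ : j ((N : ℝ)⁻¹ • ∑ n ∈ Finset.Icc 1 N, u n ω)
        ≤ ∑ n ∈ Finset.Icc 1 N, (N : ℝ)⁻¹ * j (u n ω) := by
      have hcard : (Finset.Icc 1 N).card = N := by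
        rw [Nat.card_Icc, Nat.add_sub_cancel]
      have h1 : ∑ _n ∈ Finset.Icc 1 N, (N : ℝ)⁻¹ = 1 := by
        rw [Finset.sum_const, hcard, nsmul_eq_mul]
        field_simp
      have := hj_convex.map_sum_le (fun n _ => by positivity) h1
        (fun n _ => Set.mem_univ (u n ω))
      simp only [smul_eq_mul] at this
      calc j ((N : ℝ)⁻¹ • ∑ n ∈ Finset.Icc 1 N, u n ω)
          = j (∑ n ∈ Finset.Icc 1 N, (N : ℝ)⁻¹ • u n ω) := by rw [Finset.smul_sum]
        _ ≤ ∑ n ∈ Finset.Icc 1 N, (N : ℝ)⁻¹ * j (u n ω) := this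
    have hsub : ∀ n ∈ Finset.Icc 1 N,
        j (u n ω) ≤ j ub + ⟪u n ω - ub, (μ[g n|ℱ n]) ω⟫ := by
      intro n _
      have hgrad := hU_grad (u n ω) (hCU (hu_mem n ω))
      have hsg := psg_subgrad_ineq hj_convex hgrad ub
      rw [hω n, real_inner_comm]
      linarith
    calc j ((N : ℝ)⁻¹ • ∑ n ∈ Finset.Icc 1 N, u n ω)
        ≤ ∑ n ∈ Finset.Icc 1 N, (N : ℝ)⁻¹ * j (u n ω) := hJ
      _ ≤ ∑ n ∈ Finset.Icc 1 N, (N : ℝ)⁻¹ * (j ub + ⟪u n ω - ub, (μ[g n|ℱ n]) ω⟫) := by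
          refine Finset.sum_le_sum fun n hn => ?_
          exact mul_le_mul_of_nonneg_left (hsub n hn) (by positivity)
      _ = j ub + (N : ℝ)⁻¹ * ∑ n ∈ Finset.Icc 1 N, ⟪u n ω - ub, (μ[g n|ℱ n]) ω⟫ := by
          simp only [mul_add]
          rw [Finset.sum_add_distrib, Finset.sum_const, Nat.card_Icc, Nat.add_sub_cancel,
            nsmul_eq_mul, ← Finset.mul_sum, ← mul_assoc,
            mul_inv_cancel₀ (ne_of_gt hNR), one_mul]
  -- integrate the a.e. bound
  have hRHS_int : Integrable (fun ω => j ub + (N : ℝ)⁻¹ *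
      ∑ n ∈ Finset.Icc 1 N, ⟪u n ω - ub, (μ[g n|ℱ n]) ω⟫) μ := by
    refine (integrable_const _).add ?_
    exact (integrable_finset_sum _ fun n _ => hInnC_int n).const_mul _
  have hmain : ∫ ω, j ((N : ℝ)⁻¹ • ∑ n ∈ Finset.Icc 1 N, u n ω) ∂μ
      ≤ j ub + (N : ℝ)⁻¹ * ∑ n ∈ Finset.Icc 1 N, I n := by
    calc ∫ ω, j ((N : ℝ)⁻¹ • ∑ n ∈ Finset.Icc 1 N, u n ω) ∂μ
        ≤ ∫ ω, (j ub + (N : ℝ)⁻¹ *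
            ∑ n ∈ Finset.Icc 1 N, ⟪u n ω - ub, (μ[g n|ℱ n]) ω⟫) ∂μ :=
          integral_mono_ae hjavg_int hRHS_int havg
      _ = j ub + (N : ℝ)⁻¹ * ∑ n ∈ Finset.Icc 1 N, I n := by
          rw [integral_add (integrable_const _)
            ((integrable_finset_sum _ fun n _ => hInnC_int n).const_mul _),
            integral_const, integral_const_mul,
            integral_finset_sum _ fun n _ => hInnC_int n]
          simp [hI]
  -- final arithmetic
  have hfin : (N : ℝ)⁻¹ * ((DC ^ 2 + N * (τ₀ ^ 2 * M)) / (2 * τ₀))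
      = DC * Real.sqrt M / Real.sqrt N := by
    have hsM : Real.sqrt M ^ 2 = M := Real.sq_sqrt hM.le
    have hsN : Real.sqrt N ^ 2 = (N : ℝ) := Real.sq_sqrt (Nat.cast_nonneg N)
    have hsM0 : 0 < Real.sqrt M := Real.sqrt_pos.2 hM
    have hsN0 : 0 < Real.sqrt N := Real.sqrt_pos.2 hNR
    have hsplit : Real.sqrt (M * N) = Real.sqrt M * Real.sqrt N :=
      Real.sqrt_mul hM.le N
    have hgen : ∀ x y : ℝ, 0 < x → 0 < y →
        (y ^ 2)⁻¹ * ((DC ^ 2 + y ^ 2 * ((DC / (x * y)) ^ 2 * x ^ 2)) / (2 * (DC / (x * y))))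
          = DC * x / y := by
      intro x y hx hy
      field_simp
      ring
    have hxy := hgen (Real.sqrt M) (Real.sqrt N) hsM0 hsN0
    rw [hsM, hsN] at hxy
    rw [hτ₀def, hsplit]
    exact hxy
  have hIle : (N : ℝ)⁻¹ * ∑ n ∈ Finset.Icc 1 N, I n
      ≤ DC * Real.sqrt M / Real.sqrt N := by
    rw [← hfin]
    exact mul_le_mul_of_nonneg_left hsumI (by positivity)
  linarith
end
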